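/- arXiv:2503.00970 — 7 statements merged into one kernel-verified Lean document; each statement's English description precedes it below -/
import Mathlib

section
/- Let C ⊆ ℝⁿ be a pointed n-dimensional closed convex cone, ω ⊆ Ω = S^{n-1} ∩ int C° a nonempty compact set, and f : ω → (0,∞) a continuous function. Then the Wulff shape [f] = C ∩ ⋂_{u∈ω} {y : ⟨y,u⟩ ≤ −f(u)} is a C-pseudo-cone, it satisfies [f] = C ∩ ⋂_{u∈ω} {y : ⟨y,u⟩ ≤ h_{[f]}(u)} (i.e. [f] ∈ 𝒦(C,ω)), and f(u) ≤ −h_{[f]}(u) for every u ∈ ω. -/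
open MeasureTheory Metric Set Filter
open scoped RealInnerProductSpace Pointwise Topology ENNReal

noncomputable section

/-- `ℝⁿ` as Euclidean space. -/
abbrev En (n : ℕ) := EuclideanSpace ℝ (Fin n)

/-- The standard Gaussian measure of a set `A ⊆ ℝⁿ`:
`γⁿ(A) = (2π)^{-n/2} ∫_A e^{-‖x‖²/2} dx`. -/
def gaussianMeasure (n : ℕ) (A : Set (En n)) : ℝ :=
  (2 * Real.pi) ^ (-(n : ℝ) / 2) * ∫ x in A, Real.exp (-‖x‖ ^ 2 / 2)

/-- A pointed (no lines), `n`-dimensional (nonempty interior), closed convex cone. -/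
def IsPointedCone {n : ℕ} (C : Set (En n)) : Prop :=
  IsClosed C ∧ Convex ℝ C ∧ (∀ x ∈ C, ∀ c : ℝ, 0 ≤ c → c • x ∈ C) ∧
    (interior C).Nonempty ∧ ∀ x ∈ C, -x ∈ C → x = 0

/-- The polar cone `C° = {x : ⟨x,y⟩ ≤ 0 ∀ y ∈ C}`. -/
def polarCone {n : ℕ} (C : Set (En n)) : Set (En n) := {x | ∀ y ∈ C, ⟪x, y⟫ ≤ 0}

/-- `Ω = S^{n-1} ∩ int C°`. -/
def OmegaSet {n : ℕ} (C : Set (En n)) : Set (En n) :=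
  sphere (0 : En n) 1 ∩ interior (polarCone C)

/-- A pseudo-cone: nonempty closed convex set not containing the origin with `λK ⊆ K` for `λ ≥ 1`. -/
def IsPseudoCone {n : ℕ} (K : Set (En n)) : Prop :=
  K.Nonempty ∧ IsClosed K ∧ Convex ℝ K ∧ (0 : En n) ∉ K ∧
    ∀ c : ℝ, 1 ≤ c → c • K ⊆ K

/-- The recession cone `rec K = {z : K + z ⊆ K}`. -/
def recessionCone {n : ℕ} (K : Set (En n)) : Set (En n) := {z | ∀ x ∈ K, x + z ∈ K}

/-- A `C`-pseudo-cone: a pseudo-cone whose recession cone is `C`. -/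
def IsCPseudoCone {n : ℕ} (C K : Set (En n)) : Prop :=
  IsPseudoCone K ∧ recessionCone K = C

/-- The support function `h_K(u) = sup {⟨x,u⟫ : x ∈ K}`. -/
def suppFn {n : ℕ} (K : Set (En n)) (u : En n) : ℝ := sSup ((fun x => ⟪x, u⟫) '' K)

/-- The Wulff shape `[f] = C ∩ ⋂_{u ∈ ω} {y : ⟨y,u⟩ ≤ -f(u)}`. -/
def wulffShape {n : ℕ} (C ω : Set (En n)) (f : En n → ℝ) : Set (En n) :=
  C ∩ ⋂ u ∈ ω, {y | ⟪y, u⟫ ≤ -f u}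

/-- `K ∈ 𝒦(C,ω)`: `K` is a `C`-pseudo-cone that is `C`-determined by `ω`. -/
def InKClass {n : ℕ} (C ω K : Set (En n)) : Prop :=
  IsCPseudoCone C K ∧ K = C ∩ ⋂ u ∈ ω, {y | ⟪y, u⟫ ≤ suppFn K u}

end

/-- The Wulff shape `[f]` of a positive continuous function `f` on a nonempty compact
`ω ⊆ Ω` is a `C`-pseudo-cone, belongs to `𝒦(C,ω)`, and `f(u) ≤ -h_{[f]}(u)` on `ω`. -/
theorem wulffShape_mem_KClass {n : ℕ} (hn : 1 ≤ n) (C : Set (En n)) (hC : IsPointedCone C)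
    (ω : Set (En n)) (hω : ω.Nonempty) (hωc : IsCompact ω) (hωΩ : ω ⊆ OmegaSet C)
    (f : En n → ℝ) (hf : ContinuousOn f ω) (hfpos : ∀ u ∈ ω, 0 < f u) :
    IsCPseudoCone C (wulffShape C ω f) ∧ InKClass C ω (wulffShape C ω f) ∧
      ∀ u ∈ ω, f u ≤ -suppFn (wulffShape C ω f) u := by
  obtain ⟨hCc, hCconv, hCcone, hCint, hCpt⟩ := hC
  have hmem : ∀ y, y ∈ wulffShape C ω f ↔ y ∈ C ∧ ∀ u ∈ ω, ⟪y, u⟫ ≤ -f u := by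
    intro y
    simp [wulffShape, Set.mem_iInter, Set.mem_setOf_eq]
  have hpol : ∀ u ∈ ω, ∀ y ∈ C, ⟪y, u⟫ ≤ 0 := by
    intro u hu y hy
    have h1 : u ∈ polarCone C := interior_subset (hωΩ hu).2
    have := h1 y hy
    rwa [real_inner_comm] at this
  have hnorm : ∀ u ∈ ω, ‖u‖ = 1 := fun u hu => mem_sphere_zero_iff_norm.mp (hωΩ hu).1
  -- a deep point of C
  obtain ⟨x, hx⟩ := hCint
  obtain ⟨ε, hε, hball⟩ := Metric.isOpen_iff.mp isOpen_interior x hx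
  have hneg : ∀ u ∈ ω, ⟪x, u⟫ ≤ -(ε/2) := by
    intro u hu
    have h1 : x + (ε/2) • u ∈ C := by
      apply interior_subset; apply hball
      rw [Metric.mem_ball, dist_eq_norm, add_sub_cancel_left, norm_smul,
        Real.norm_eq_abs, hnorm u hu]
      rw [abs_of_pos (by linarith)]
      linarith
    have h2 := hpol u hu _ h1
    rw [inner_add_left, real_inner_smul_left, real_inner_self_eq_norm_sq, hnorm u hu] at h2
    nlinarith
  -- max of f
  obtain ⟨u₀, hu₀, hmax⟩ := hωc.exists_isMaxOn hω hf
  have hM : 0 < f u₀ := hfpos u₀ hu₀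
  have hMle : ∀ u ∈ ω, f u ≤ f u₀ := fun u hu => hmax hu
  -- a point of the Wulff shape
  have hx₁mem : (2 * f u₀ / ε) • x ∈ wulffShape C ω f := by
    refine (hmem _).mpr ⟨hCcone x (interior_subset hx) _ (by positivity), ?_⟩
    intro u hu
    rw [real_inner_smul_left]
    have h1 := hneg u hu
    have h2 := hMle u hu
    have h3 : (2 * f u₀ / ε) * ⟪x, u⟫ ≤ (2 * f u₀ / ε) * (-(ε/2)) :=
      mul_le_mul_of_nonneg_left h1 (by positivity)
    have h4 : (2 * f u₀ / ε) * (-(ε/2)) = -f u₀ := by field_simp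
    linarith
  have hKne : (wulffShape C ω f).Nonempty := ⟨_, hx₁mem⟩
  have hKcl : IsClosed (wulffShape C ω f) := by
    apply hCc.inter
    apply isClosed_biInter
    intro u hu
    exact isClosed_le (Continuous.inner continuous_id continuous_const) continuous_const
  have hKconv : Convex ℝ (wulffShape C ω f) := by
    apply hCconv.inter
    apply convex_iInter₂
    intro u hu a ha b hb s t hs ht hst
    simp only [Set.mem_setOf_eq] at *
    rw [inner_add_left, real_inner_smul_left, real_inner_smul_left]
    have e1 : s * ⟪a, u⟫ ≤ s * (-f u) := mul_le_mul_of_nonneg_left ha hs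
    have e2 : t * ⟪b, u⟫ ≤ t * (-f u) := mul_le_mul_of_nonneg_left hb ht
    have e3 : s * (-f u) + t * (-f u) = -f u := by rw [← add_mul, hst]; ring
    linarith
  have hK0 : (0 : En n) ∉ wulffShape C ω f := by
    intro h0
    have := ((hmem 0).mp h0).2 u₀ hu₀
    simp only [inner_zero_left] at this
    linarith
  have hKsm : ∀ c : ℝ, 1 ≤ c → c • wulffShape C ω f ⊆ wulffShape C ω f := by
    intro c hc y hy
    obtain ⟨z, hz, rfl⟩ := hy
    obtain ⟨hzC, hzω⟩ := (hmem z).mp hz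
    refine (hmem _).mpr ⟨hCcone z hzC c (by linarith), ?_⟩
    intro u hu
    rw [real_inner_smul_left]
    have h1 := hzω u hu
    have h2 := hfpos u hu
    nlinarith
  have hCadd : ∀ a ∈ C, ∀ b ∈ C, a + b ∈ C := by
    intro a ha b hb
    have h1 : (1/2 : ℝ) • a + (1/2 : ℝ) • b ∈ C :=
      hCconv ha hb (by norm_num) (by norm_num) (by norm_num)
    have h2 := hCcone _ h1 2 (by norm_num)
    have : (2:ℝ) • ((1/2 : ℝ) • a + (1/2 : ℝ) • b) = a + b := by
      rw [smul_add, smul_smul, smul_smul]; norm_num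
    rwa [this] at h2
  have hrec : recessionCone (wulffShape C ω f) = C := by
    ext z
    constructor
    · intro hz
      have hseq : ∀ k : ℕ, (2 * f u₀ / ε) • x + (k : ℝ) • z ∈ wulffShape C ω f := by
        intro k
        induction k with
        | zero => simpa using hx₁mem
        | succ k ih =>
          have := hz _ ih
          have heq : ((2 * f u₀ / ε) • x + (k : ℝ) • z) + z
              = (2 * f u₀ / ε) • x + ((k : ℝ) + 1) • z := by
            rw [add_smul, one_smul]; abel
          rw [heq] at this
          push_cast
          exact this
      have hseq2 : ∀ k : ℕ, 1 ≤ k → (1 / (k:ℝ)) • ((2 * f u₀ / ε) • x) + z ∈ C := by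
        intro k hk
        have hkpos : (0:ℝ) < k := by exact_mod_cast hk
        have h1 : (2 * f u₀ / ε) • x + (k : ℝ) • z ∈ C := ((hmem _).mp (hseq k)).1
        have h2 := hCcone _ h1 (1 / (k:ℝ)) (by positivity)
        have heq : (1 / (k:ℝ)) • ((2 * f u₀ / ε) • x + (k : ℝ) • z)
            = (1 / (k:ℝ)) • ((2 * f u₀ / ε) • x) + z := by
          rw [smul_add]
          congr 1
          rw [smul_smul, one_div_mul_cancel (ne_of_gt hkpos), one_smul]
        rwa [heq] at h2
      have h1 : Filter.Tendsto (fun k : ℕ => (1 / (k:ℝ)) • ((2 * f u₀ / ε) • x) + z)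
          Filter.atTop (𝓝 ((0:ℝ) • ((2 * f u₀ / ε) • x) + z)) :=
        (tendsto_one_div_atTop_nhds_zero_nat.smul_const _).add_const z
      have h2 : Filter.Tendsto (fun k : ℕ => (1 / (k:ℝ)) • ((2 * f u₀ / ε) • x) + z)
          Filter.atTop (𝓝 z) := by simpa using h1
      refine hCc.mem_of_tendsto h2 ?_
      filter_upwards [Filter.eventually_ge_atTop 1] with k hk
      exact hseq2 k hk
    · intro hzC y hy
      obtain ⟨hyC, hyω⟩ := (hmem y).mp hy
      refine (hmem _).mpr ⟨hCadd y hyC z hzC, ?_⟩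
      intro u hu
      rw [inner_add_left]
      have h1 := hyω u hu
      have h2 := hpol u hu z hzC
      linarith
  have hbdd : ∀ u ∈ ω, BddAbove ((fun x => ⟪x, u⟫) '' wulffShape C ω f) := by
    intro u hu
    refine ⟨-f u, ?_⟩
    rintro r ⟨y, hy, rfl⟩
    exact ((hmem y).mp hy).2 u hu
  have hsupp_le : ∀ u ∈ ω, suppFn (wulffShape C ω f) u ≤ -f u := by
    intro u hu
    apply csSup_le (hKne.image _)
    rintro r ⟨y, hy, rfl⟩
    exact ((hmem y).mp hy).2 u hu
  have hCP : IsCPseudoCone C (wulffShape C ω f) :=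
    ⟨⟨hKne, hKcl, hKconv, hK0, hKsm⟩, hrec⟩
  refine ⟨hCP, ⟨hCP, ?_⟩, fun u hu => by linarith [hsupp_le u hu]⟩
  apply Set.Subset.antisymm
  · intro y hy
    refine ⟨((hmem y).mp hy).1, ?_⟩
    simp only [Set.mem_iInter, Set.mem_setOf_eq]
    intro u hu
    exact le_csSup (hbdd u hu) ⟨y, hy, rfl⟩
  · rintro y ⟨hyC, hy2⟩
    simp only [Set.mem_iInter, Set.mem_setOf_eq] at hy2
    exact (hmem y).mpr ⟨hyC, fun u hu => le_trans (hy2 u hu) (hsupp_le u hu)⟩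
end

section
/- Let C ⊆ ℝⁿ be a pointed n-dimensional closed convex cone, ω ⊆ Ω = S^{n-1} ∩ int C° a nonempty compact set, μ a finite Borel measure on ω, and p > 0. Let K be a C-pseudo-cone and set d = dist(0,K) > 0. Then γⁿ(K) · ∫_ω (−h_K(u))^p dμ(u) ≤ (2n√n / (√(2π) d)) · e^{-d²/(2n)} · μ(ω) · d^p. -/
open MeasureTheory Metric Set Filter
open scoped RealInnerProductSpace Pointwise Topology ENNReal

section AuxGauss

/-- normal form for the 1-D gaussian. -/
lemma oneDimGaussEq : (fun s : ℝ => Real.exp (-s ^ 2 / 2)) = fun s => Real.exp (-(1/2) * s ^ 2) := by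
  funext s; congr 1; ring

lemma integrable_oneDimGauss : MeasureTheory.Integrable (fun s : ℝ => Real.exp (-s ^ 2 / 2)) := by
  rw [oneDimGaussEq]; exact integrable_exp_neg_mul_sq (by norm_num)

lemma integral_oneDimGauss : ∫ s : ℝ, Real.exp (-s ^ 2 / 2) = Real.sqrt (2 * Real.pi) := by
  rw [oneDimGaussEq, integral_gaussian, show Real.pi / (1/2) = 2 * Real.pi by ring]

lemma integrable_mulOneDimGauss :
    MeasureTheory.Integrable (fun s : ℝ => s * Real.exp (-s ^ 2 / 2)) := by
  have heq : (fun s : ℝ => s * Real.exp (-s ^ 2 / 2))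
      = fun s => s * Real.exp (-(1/2) * s ^ 2) := by
    funext s; rw [show -s ^ 2 / 2 = -(1/2) * s ^ 2 by ring]
  rw [heq]; exact integrable_mul_exp_neg_mul_sq (by norm_num)

/-- 1-D Gaussian tail bound `∫_{[d,∞)} e^{-s²/2} ds ≤ e^{-d²/2}/d`. -/
lemma gaussTail {d : ℝ} (hd : 0 < d) :
    ∫ s in Set.Ici d, Real.exp (-s ^ 2 / 2) ≤ Real.exp (-d ^ 2 / 2) / d := by
  have hkey : ∫ s in Set.Ioi d, s * Real.exp (-s ^ 2 / 2) = Real.exp (-d ^ 2 / 2) := by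
    have hderiv : ∀ x ∈ Set.Ici d, HasDerivAt (fun s : ℝ => -Real.exp (-s ^ 2 / 2))
        (x * Real.exp (-x ^ 2 / 2)) x := by
      intro x _
      have h1 : HasDerivAt (fun s : ℝ => -s ^ 2 / 2) (-x) x := by
        have h := ((hasDerivAt_pow 2 x).neg.div_const 2)
        refine h.congr_deriv ?_
        simp; ring
      have h3 := (h1.exp).neg
      refine h3.congr_deriv ?_
      ring
    have hint : MeasureTheory.IntegrableOn (fun s : ℝ => s * Real.exp (-s ^ 2 / 2))
        (Set.Ioi d) := integrable_mulOneDimGauss.integrableOn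
    have hbot : Tendsto (fun s : ℝ => -s ^ 2 / 2) atTop atBot := by
      have h1 : Tendsto (fun s : ℝ => s ^ 2) atTop atTop := tendsto_pow_atTop two_ne_zero
      have h2 : Tendsto (fun s : ℝ => -s ^ 2) atTop atBot :=
        tendsto_neg_atBot_iff.mpr h1
      exact h2.atBot_div_const (by norm_num)
    have htend : Tendsto (fun s : ℝ => -Real.exp (-s ^ 2 / 2)) atTop (𝓝 0) := by
      have h5 : Tendsto (fun s : ℝ => Real.exp (-s ^ 2 / 2)) atTop (𝓝 0) :=
        Real.tendsto_exp_atBot.comp hbot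
      simpa using h5.neg
    rw [MeasureTheory.integral_Ioi_of_hasDerivAt_of_tendsto' hderiv hint htend]
    simp
  have hmono : ∫ s in Set.Ici d, Real.exp (-s ^ 2 / 2)
      ≤ ∫ s in Set.Ici d, d⁻¹ * (s * Real.exp (-s ^ 2 / 2)) := by
    refine MeasureTheory.setIntegral_mono_on integrable_oneDimGauss.integrableOn
      ((integrable_mulOneDimGauss.const_mul d⁻¹).integrableOn) measurableSet_Ici ?_
    intro s hs
    have h1 : 1 ≤ d⁻¹ * s := by
      rw [← div_eq_inv_mul]
      exact (one_le_div hd).mpr hs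
    nlinarith [Real.exp_pos (-s ^ 2 / 2)]
  calc ∫ s in Set.Ici d, Real.exp (-s ^ 2 / 2)
      ≤ ∫ s in Set.Ici d, d⁻¹ * (s * Real.exp (-s ^ 2 / 2)) := hmono
    _ = d⁻¹ * ∫ s in Set.Ici d, s * Real.exp (-s ^ 2 / 2) := by
        rw [MeasureTheory.integral_const_mul]
    _ = d⁻¹ * Real.exp (-d ^ 2 / 2) := by
        rw [MeasureTheory.integral_Ici_eq_integral_Ioi, hkey]
    _ = Real.exp (-d ^ 2 / 2) / d := by ring

/-- The gaussian density on `ℝⁿ` factors as a product over coordinates. -/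
lemma gauss_prod_eq {n : ℕ} (x : En n) :
    Real.exp (-‖x‖ ^ 2 / 2) = ∏ i, Real.exp (-(x i) ^ 2 / 2) := by
  rw [← Real.exp_sum]
  congr 1
  have hnorm : ‖x‖ ^ 2 = ∑ i, (x i) ^ 2 := by
    rw [EuclideanSpace.norm_eq, Real.sq_sqrt (by positivity)]
    simp [sq_abs]
  rw [hnorm, neg_div, Finset.sum_div, ← Finset.sum_neg_distrib]
  congr 1
  funext i
  ring

lemma integrable_gaussPi (n : ℕ) :
    MeasureTheory.Integrable (fun y : Fin n → ℝ => ∏ i, Real.exp (-(y i) ^ 2 / 2)) :=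
  MeasureTheory.Integrable.fintype_prod (f := fun _ s => Real.exp (-s ^ 2 / 2))
    (fun _ => integrable_oneDimGauss)

lemma integrable_gaussEn (n : ℕ) :
    MeasureTheory.Integrable (fun x : En n => Real.exp (-‖x‖ ^ 2 / 2)) := by
  have h := ((EuclideanSpace.volume_preserving_symm_measurableEquiv_toLp (Fin n)).integrable_comp_emb
    (MeasurableEquiv.measurableEmbedding _)).mpr (integrable_gaussPi n)
  convert h using 1
  · rfl
  funext x
  simp only [Function.comp_apply]
  rw [gauss_prod_eq]
  congr 1

/-- The key gaussian estimate: a closed convex set at distance `d > 0` from the origin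
has gaussian measure at most `e^{-d²/2}/(√(2π) d)`. -/
lemma gauss_upper {n : ℕ} (hn : 1 ≤ n) (K : Set (En n)) (hne : K.Nonempty)
    (hcl : IsClosed K) (hconv : Convex ℝ K) {d : ℝ} (hd : d = Metric.infDist 0 K)
    (hd0 : 0 < d) :
    gaussianMeasure n K ≤ Real.exp (-d ^ 2 / 2) / (Real.sqrt (2 * Real.pi) * d) := by
  classical
  obtain ⟨x₀, hx₀K, hx₀d⟩ := hcl.exists_infDist_eq_dist hne (0 : En n)
  have hx₀norm : ‖x₀‖ = d := by rw [hd, hx₀d, dist_zero_left]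
  -- supporting halfspace at nearest point
  have hsupport : ∀ x ∈ K, d ^ 2 ≤ ⟪x₀, x⟫ := by
    intro x hx
    have hkey : ∀ t : ℝ, 0 < t → t ≤ 1 →
        0 ≤ 2 * ⟪x₀, x - x₀⟫ + t * ‖x - x₀‖ ^ 2 := by
      intro t ht0 ht1
      have hz : x₀ + t • (x - x₀) ∈ K := by
        have h := hconv hx₀K hx (by linarith : (0:ℝ) ≤ 1 - t) ht0.le (by ring)
        convert h using 1
        rw [smul_sub, sub_smul, one_smul]
        abel
      have hdz : d ≤ ‖x₀ + t • (x - x₀)‖ := by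
        rw [hd, ← dist_zero_left]
        exact Metric.infDist_le_dist_of_mem hz
      have hsq : d ^ 2 ≤ ‖x₀ + t • (x - x₀)‖ ^ 2 := by
        nlinarith [norm_nonneg (x₀ + t • (x - x₀))]
      rw [norm_add_sq_real, real_inner_smul_right, norm_smul, Real.norm_eq_abs,
        abs_of_pos ht0, hx₀norm] at hsq
      by_contra hcon
      push_neg at hcon
      nlinarith [mul_pos ht0 (neg_pos.mpr hcon)]
    have hc : 0 ≤ ⟪x₀, x - x₀⟫ := by
      have h2 : ∀ ε : ℝ, 0 < ε → 0 ≤ 2 * ⟪x₀, x - x₀⟫ + ε := by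
        intro ε hε
        set B := ‖x - x₀‖ ^ 2 with hB
        have hB0 : 0 ≤ B := sq_nonneg _
        set t := min 1 (ε / (B + 1)) with ht
        have ht0 : 0 < t := lt_min one_pos (div_pos hε (by linarith))
        have ht1 : t ≤ 1 := min_le_left _ _
        have h3 := hkey t ht0 ht1
        have h5 : t ≤ ε / (B + 1) := min_le_right _ _
        have h4 : t * B ≤ ε := by
          calc t * B ≤ (ε / (B + 1)) * B := by nlinarith
            _ ≤ ε := by
                rw [div_mul_eq_mul_div, div_le_iff₀ (by linarith : (0:ℝ) < B + 1)]
                nlinarith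
        linarith
      by_contra hcon
      push_neg at hcon
      have := h2 (-⟪x₀, x - x₀⟫) (by linarith)
      linarith
    have h6 : ⟪x₀, x - x₀⟫ = ⟪x₀, x⟫ - ⟪x₀, x₀⟫ := inner_sub_right _ _ _
    have h7 : ⟪x₀, x₀⟫ = d ^ 2 := by
      rw [real_inner_self_eq_norm_sq, hx₀norm]
    rw [h6, h7] at hc
    linarith
  -- orthonormal basis with first vector pointing at the nearest point
  set u : En n := d⁻¹ • x₀ with hu
  have hunorm : ‖u‖ = 1 := by
    rw [hu, norm_smul, Real.norm_eq_abs, abs_of_pos (inv_pos.mpr hd0), hx₀norm]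
    field_simp
  set i0 : Fin n := ⟨0, hn⟩ with hi0
  have hcard : Module.finrank ℝ (En n) = Fintype.card (Fin n) := by
    simp [finrank_euclideanSpace]
  have horth : Orthonormal ℝ (Set.restrict {i0} (fun _ : Fin n => u)) := by
    constructor
    · intro i; exact hunorm
    · intro i j hij
      exact absurd (Subtype.ext (i.2.trans j.2.symm)) hij
  obtain ⟨b, hb⟩ := horth.exists_orthonormalBasis_extension_of_card_eq hcard
  have hbi0 : b i0 = u := hb i0 rfl
  set φ := (MeasurableEquiv.toLp 2 (Fin n → ℝ)).symm with hφ
  set S' : Set (Fin n → ℝ) := {y | d ≤ y i0} with hS'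
  set T : Set (En n) := b.repr ⁻¹' (φ ⁻¹' S') with hT
  have hKT : K ⊆ T := by
    intro x hx
    have h1 : b.repr x i0 = ⟪b i0, x⟫ := b.repr_apply_apply x i0
    have h2 : d ≤ b.repr x i0 := by
      rw [h1, hbi0, hu, real_inner_smul_left]
      have h4 : d⁻¹ * d ^ 2 ≤ d⁻¹ * ⟪x₀, x⟫ :=
        mul_le_mul_of_nonneg_left (hsupport x hx) (inv_pos.mpr hd0).le
      have h5 : d⁻¹ * d ^ 2 = d := by
        rw [sq, ← mul_assoc, inv_mul_cancel₀ hd0.ne', one_mul]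
      linarith
    show φ (b.repr x) ∈ S'
    simpa [hS', φ] using h2
  have hS'meas : MeasurableSet S' :=
    measurableSet_preimage (measurable_pi_apply i0) measurableSet_Ici
  -- chain of integral identities
  have h1 : ∫ x in K, Real.exp (-‖x‖ ^ 2 / 2) ≤ ∫ x in T, Real.exp (-‖x‖ ^ 2 / 2) :=
    MeasureTheory.setIntegral_mono_set (integrable_gaussEn n).integrableOn
      (Filter.Eventually.of_forall fun x => (Real.exp_pos _).le)
      (HasSubset.Subset.eventuallyLE hKT)
  have h2 : ∫ x in T, Real.exp (-‖x‖ ^ 2 / 2)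
      = ∫ y in φ ⁻¹' S', Real.exp (-‖y‖ ^ 2 / 2) := by
    rw [← (b.measurePreserving_repr).setIntegral_preimage_emb
      (b.repr.toHomeomorph.measurableEmbedding)
      (fun y => Real.exp (-‖y‖ ^ 2 / 2)) (φ ⁻¹' S')]
    simp only [LinearIsometryEquiv.norm_map]
    rfl
  have h3 : ∫ y in φ ⁻¹' S', Real.exp (-‖y‖ ^ 2 / 2)
      = ∫ z in S', ∏ i, Real.exp (-(z i) ^ 2 / 2) := by
    rw [← (EuclideanSpace.volume_preserving_symm_measurableEquiv_toLp (Fin n)).setIntegral_preimage_emb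
      (MeasurableEquiv.measurableEmbedding _)
      (fun z => ∏ i, Real.exp (-(z i) ^ 2 / 2)) S']
    refine MeasureTheory.setIntegral_congr_fun (hS'meas.preimage φ.measurable) ?_
    intro y _
    have hco : ∀ i, (MeasurableEquiv.toLp 2 (Fin n → ℝ)).symm y i = y i := fun _ => rfl
    simp only [hco]
    exact gauss_prod_eq y
  have h4 : ∫ z in S', ∏ i, Real.exp (-(z i) ^ 2 / 2)
      = (∫ s in Set.Ici d, Real.exp (-s ^ 2 / 2)) * (Real.sqrt (2 * Real.pi)) ^ (n - 1) := by
    set h : Fin n → ℝ → ℝ := fun i s =>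
      if i = i0 then Set.indicator (Set.Ici d) (fun t => Real.exp (-t ^ 2 / 2)) s
      else Real.exp (-s ^ 2 / 2) with hdefh
    rw [← MeasureTheory.integral_indicator hS'meas]
    have hind : (S'.indicator fun z => ∏ i, Real.exp (-(z i) ^ 2 / 2))
        = fun z => ∏ i, h i (z i) := by
      funext z
      by_cases hz : z ∈ S'
      · rw [Set.indicator_of_mem hz]
        refine Finset.prod_congr rfl fun i _ => ?_
        by_cases hi : i = i0
        · subst hi
          simp only [hdefh, if_pos rfl]
          have hz' : z i0 ∈ Set.Ici d := hz
          exact (Set.indicator_of_mem hz' (fun t => Real.exp (-t ^ 2 / 2))).symm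
        · simp [hdefh, hi]
      · rw [Set.indicator_of_notMem hz]
        refine (Finset.prod_eq_zero (Finset.mem_univ i0) ?_).symm
        simp only [hdefh, if_pos rfl]
        have hz' : z i0 ∉ Set.Ici d := hz
        exact Set.indicator_of_notMem hz' (fun t => Real.exp (-t ^ 2 / 2))
      
    rw [hind, MeasureTheory.integral_fintype_prod_volume_eq_prod (𝕜 := ℝ) h]
    rw [← Finset.mul_prod_erase Finset.univ (fun i => ∫ s, h i s) (Finset.mem_univ i0)]
    have hothers : ∀ i ∈ Finset.univ.erase i0,
        (∫ s, h i s) = Real.sqrt (2 * Real.pi) := by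
      intro i hi
      have hne' : i ≠ i0 := Finset.ne_of_mem_erase hi
      simp only [hdefh, if_neg hne']
      exact integral_oneDimGauss
    rw [Finset.prod_congr rfl hothers, Finset.prod_const,
      Finset.card_erase_of_mem (Finset.mem_univ i0), Finset.card_univ, Fintype.card_fin]
    congr 1
    simp only [hdefh, if_pos rfl]
    exact MeasureTheory.integral_indicator measurableSet_Ici
  have h5 : ∫ x in K, Real.exp (-‖x‖ ^ 2 / 2)
      ≤ (Real.exp (-d ^ 2 / 2) / d) * (Real.sqrt (2 * Real.pi)) ^ (n - 1) := by
    refine (h1.trans_eq (h2.trans (h3.trans h4))).trans ?_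
    exact mul_le_mul_of_nonneg_right (gaussTail hd0) (by positivity)
  -- combine with the normalizing constant
  have h2π : (0:ℝ) < 2 * Real.pi := by positivity
  set A := Real.sqrt (2 * Real.pi) with hA
  have hA0 : 0 < A := Real.sqrt_pos.mpr h2π
  have hc0 : (0:ℝ) ≤ (2 * Real.pi) ^ (-(n : ℝ) / 2) := Real.rpow_nonneg h2π.le _
  have hkeyA : (2 * Real.pi) ^ (-(n : ℝ) / 2) * A ^ (n - 1) = A⁻¹ := by
    rw [show (2 * Real.pi) = A ^ (2:ℕ) by rw [hA]; exact (Real.sq_sqrt h2π.le).symm]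
    rw [← Real.rpow_natCast A 2, ← Real.rpow_mul hA0.le,
      ← Real.rpow_natCast A (n - 1), ← Real.rpow_add hA0]
    rw [show ((2:ℕ):ℝ) * (-(n : ℝ) / 2) + ((n - 1 : ℕ) : ℝ) = -1 by
      rw [Nat.cast_sub hn]; push_cast; ring]
    exact Real.rpow_neg_one A
  calc gaussianMeasure n K
      = (2 * Real.pi) ^ (-(n : ℝ) / 2) * ∫ x in K, Real.exp (-‖x‖ ^ 2 / 2) := rfl
    _ ≤ (2 * Real.pi) ^ (-(n : ℝ) / 2)
        * ((Real.exp (-d ^ 2 / 2) / d) * A ^ (n - 1)) := by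
        exact mul_le_mul_of_nonneg_left h5 hc0
    _ = ((2 * Real.pi) ^ (-(n : ℝ) / 2) * A ^ (n - 1)) * (Real.exp (-d ^ 2 / 2) / d) := by
        ring
    _ = A⁻¹ * (Real.exp (-d ^ 2 / 2) / d) := by rw [hkeyA]
    _ = Real.exp (-d ^ 2 / 2) / (A * d) := by
        field_simp

end AuxGauss

/-- For `p > 0`, a finite Borel measure `μ` on a nonempty compact `ω ⊆ Ω`, and a
`C`-pseudo-cone `K` with `d = dist(0,K) > 0`:
`γⁿ(K) ∫_ω (-h_K)^p dμ ≤ (2n√n/(√(2π) d)) e^{-d²/(2n)} μ(ω) d^p`. -/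
theorem I_mu_upper_estimate {n : ℕ} (hn : 1 ≤ n) (C : Set (En n)) (hC : IsPointedCone C)
    (ω : Set (En n)) (hω : ω.Nonempty) (hωc : IsCompact ω) (hωΩ : ω ⊆ OmegaSet C)
    (μ : Measure (En n)) [IsFiniteMeasure μ] (hμsupp : μ ωᶜ = 0)
    (p : ℝ) (hp : 0 < p)
    (K : Set (En n)) (hK : IsCPseudoCone C K)
    (d : ℝ) (hd : d = Metric.infDist 0 K) (hd0 : 0 < d) :
    gaussianMeasure n K * ∫ u in ω, (-suppFn K u) ^ p ∂μ ≤
      2 * n * Real.sqrt n / (Real.sqrt (2 * Real.pi) * d) * Real.exp (-d ^ 2 / (2 * n)) *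
        (μ ω).toReal * d ^ p := by
  obtain ⟨⟨hne, hcl, hconv, h0K, hscale⟩, hrec⟩ := hK
  -- K is contained in C
  have hKC : K ⊆ C := by
    intro x hx
    rw [← hrec]
    intro y hy
    have hmid : (1/2 : ℝ) • y + (1/2 : ℝ) • x ∈ K :=
      hconv hy hx (by norm_num) (by norm_num) (by norm_num)
    refine hscale 2 one_le_two ⟨_, hmid, ?_⟩
    show (2:ℝ) • ((1/2 : ℝ) • y + (1/2 : ℝ) • x) = y + x
    rw [smul_add, smul_smul, smul_smul]
    norm_num
  -- nearest point
  obtain ⟨x₀, hx₀K, hx₀d⟩ := hcl.exists_infDist_eq_dist hne (0 : En n)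
  have hx₀norm : ‖x₀‖ = d := by rw [hd, hx₀d, dist_zero_left]
  -- bounds on the support function on ω
  have hsupp_le : ∀ u ∈ ω, suppFn K u ≤ 0 := by
    intro u hu
    refine Real.sSup_le ?_ le_rfl
    rintro y ⟨x, hx, rfl⟩
    have hpol : u ∈ polarCone C := interior_subset (hωΩ hu).2
    have := hpol x (hKC hx)
    rwa [real_inner_comm] at this
  have hsupp_ge : ∀ u ∈ ω, -d ≤ suppFn K u := by
    intro u hu
    have hbdd : BddAbove ((fun x => ⟪x, u⟫) '' K) := by
      refine ⟨0, ?_⟩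
      rintro y ⟨x, hx, rfl⟩
      have hpol : u ∈ polarCone C := interior_subset (hωΩ hu).2
      have := hpol x (hKC hx)
      rwa [real_inner_comm] at this
    have hmem : ⟪x₀, u⟫ ∈ (fun x => ⟪x, u⟫) '' K := ⟨x₀, hx₀K, rfl⟩
    have hul : ‖u‖ = 1 := mem_sphere_zero_iff_norm.mp (hωΩ hu).1
    have habs : |⟪x₀, u⟫| ≤ d := by
      have := abs_real_inner_le_norm x₀ u
      rwa [hx₀norm, hul, mul_one] at this
    exact le_trans (abs_le.mp habs).1 (le_csSup hbdd hmem)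
  have hωmeas : MeasurableSet ω := hωc.isClosed.measurableSet
  -- the μ-integral is at most μ(ω) d^p
  have hI0 : 0 ≤ ∫ u in ω, (-suppFn K u) ^ p ∂μ := by
    refine MeasureTheory.setIntegral_nonneg hωmeas fun u hu => ?_
    exact Real.rpow_nonneg (neg_nonneg.mpr (hsupp_le u hu)) p
  have hI_le : ∫ u in ω, (-suppFn K u) ^ p ∂μ ≤ (μ ω).toReal * d ^ p := by
    have hbound : ∀ᵐ u ∂(μ.restrict ω), ‖(-suppFn K u) ^ p‖ ≤ d ^ p := by
      filter_upwards [MeasureTheory.ae_restrict_mem hωmeas] with u hu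
      have ha : 0 ≤ -suppFn K u := neg_nonneg.mpr (hsupp_le u hu)
      have hb : -suppFn K u ≤ d := by linarith [hsupp_ge u hu]
      rw [Real.norm_eq_abs, abs_of_nonneg (Real.rpow_nonneg ha p)]
      exact Real.rpow_le_rpow ha hb hp.le
    have hnorm := MeasureTheory.norm_integral_le_of_norm_le_const hbound
    rw [MeasureTheory.measureReal_restrict_apply_univ] at hnorm
    calc ∫ u in ω, (-suppFn K u) ^ p ∂μ
        ≤ ‖∫ u in ω, (-suppFn K u) ^ p ∂μ‖ := le_abs_self _
      _ ≤ d ^ p * (μ ω).toReal := hnorm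
      _ = (μ ω).toReal * d ^ p := mul_comm _ _
  -- gaussian bound
  have hG := gauss_upper hn K hne hcl hconv hd hd0
  have hG0 : 0 ≤ Real.exp (-d ^ 2 / 2) / (Real.sqrt (2 * Real.pi) * d) := by positivity
  have hM0 : 0 ≤ (μ ω).toReal * d ^ p :=
    mul_nonneg ENNReal.toReal_nonneg (Real.rpow_nonneg hd0.le p)
  have hn1 : (1:ℝ) ≤ (n : ℝ) := by exact_mod_cast hn
  have hGG' : Real.exp (-d ^ 2 / 2) / (Real.sqrt (2 * Real.pi) * d)
      ≤ 2 * n * Real.sqrt n / (Real.sqrt (2 * Real.pi) * d) * Real.exp (-d ^ 2 / (2 * n)) := by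
    have hD : (0:ℝ) < Real.sqrt (2 * Real.pi) * d := by positivity
    rw [div_mul_eq_mul_div, div_le_div_iff₀ hD hD]
    have hexp : Real.exp (-d ^ 2 / 2) ≤ Real.exp (-d ^ 2 / (2 * n)) := by
      refine Real.exp_le_exp.mpr ?_
      rw [neg_div, neg_div, neg_le_neg_iff]
      have h2n : (2:ℝ) ≤ 2 * n := by linarith
      exact div_le_div_of_nonneg_left (sq_nonneg d) (by norm_num) h2n
    have hsq : (1:ℝ) ≤ Real.sqrt n := by
      rw [show (1:ℝ) = Real.sqrt 1 by simp]
      exact Real.sqrt_le_sqrt hn1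
    have hcoef : (1:ℝ) ≤ 2 * n * Real.sqrt n := by nlinarith
    have := mul_le_mul hcoef hexp (Real.exp_pos _).le (by nlinarith)
    nlinarith [this, hD, Real.exp_pos (-d ^ 2 / 2), Real.exp_pos (-d ^ 2 / (2 * (n:ℝ)))]
  calc gaussianMeasure n K * ∫ u in ω, (-suppFn K u) ^ p ∂μ
      ≤ (Real.exp (-d ^ 2 / 2) / (Real.sqrt (2 * Real.pi) * d)) * ((μ ω).toReal * d ^ p) :=
        mul_le_mul hG hI_le hI0 hG0
    _ ≤ (2 * n * Real.sqrt n / (Real.sqrt (2 * Real.pi) * d) * Real.exp (-d ^ 2 / (2 * n)))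
        * ((μ ω).toReal * d ^ p) := mul_le_mul_of_nonneg_right hGG' hM0
    _ = 2 * n * Real.sqrt n / (Real.sqrt (2 * Real.pi) * d) * Real.exp (-d ^ 2 / (2 * n)) *
        (μ ω).toReal * d ^ p := by ring
end

section
/- Let C ⊆ ℝⁿ be a pointed n-dimensional closed convex cone, ω ⊆ Ω = S^{n-1} ∩ int C° a nonempty compact set, μ a nonzero finite Borel measure on ω, and p < 0. Let K be a C-pseudo-cone and set d = dist(0,K) > 0. Then γⁿ(K) / ∫_ω (−h_K(u))^p dμ(u) ≤ (2n√n / (√(2π) d)) · e^{-d²/(2n)} · d^{-p} / μ(ω). -/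
open MeasureTheory Metric Set Filter
open scoped RealInnerProductSpace Pointwise Topology ENNReal

section AuxLemmas

lemma int_exp_half : Integrable (fun t : ℝ => Real.exp (-t^2/2)) := by
  have := integrable_exp_neg_mul_sq (b := (1/2 : ℝ)) (by norm_num)
  convert this using 2 with t
  ring_nf

lemma int_mul_exp_half : Integrable (fun t : ℝ => t * Real.exp (-t^2/2)) := by
  have := integrable_mul_exp_neg_mul_sq (b := (1/2 : ℝ)) (by norm_num)
  convert this using 2 with t
  ring_nf

lemma tail_eq (a : ℝ) : ∫ t in Ioi a, t * Real.exp (-t^2/2) = Real.exp (-a^2/2) := by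
  have hderiv : ∀ x ∈ Ici a, HasDerivAt (fun t : ℝ => -Real.exp (-t^2/2))
      (x * Real.exp (-x^2/2)) x := by
    intro x _
    have h1 : HasDerivAt (fun t : ℝ => -t^2/2) (-x) x := by
      have := ((hasDerivAt_pow 2 x).neg).div_const 2
      refine this.congr_deriv ?_
      push_cast; ring
    have := (h1.exp).neg
    refine this.congr_deriv ?_
    ring
  have htend : Tendsto (fun t : ℝ => -Real.exp (-t^2/2)) atTop (nhds 0) := by
    rw [← neg_zero]
    apply Tendsto.neg
    apply Real.tendsto_exp_atBot.comp
    have h2 : Tendsto (fun t : ℝ => t^2/2) atTop atTop :=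
      (tendsto_pow_atTop two_ne_zero).atTop_div_const (by norm_num)
    have := tendsto_neg_atTop_atBot.comp h2
    convert this using 2 with t
    simp [neg_div]
  have := integral_Ioi_of_hasDerivAt_of_tendsto' hderiv (int_mul_exp_half.integrableOn) htend
  rw [this]; ring

lemma tail_le (a : ℝ) (ha : 0 < a) :
    ∫ t in Ioi a, Real.exp (-t^2/2) ≤ Real.exp (-a^2/2) / a := by
  have h1 : ∫ t in Ioi a, Real.exp (-t^2/2) ≤ ∫ t in Ioi a, (t/a) * Real.exp (-t^2/2) := by
    apply setIntegral_mono_on int_exp_half.integrableOn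
      ((int_mul_exp_half.div_const a).integrableOn.congr_fun (by intro t _; ring) measurableSet_Ioi)
    · exact measurableSet_Ioi
    · intro t ht
      have h2 : (1:ℝ) ≤ t/a := (one_le_div ha).2 (le_of_lt ht)
      nlinarith [Real.exp_pos (-t^2/2)]
  calc ∫ t in Ioi a, Real.exp (-t^2/2) ≤ ∫ t in Ioi a, (t/a) * Real.exp (-t^2/2) := h1
    _ = (∫ t in Ioi a, t * Real.exp (-t^2/2)) / a := by
        rw [← integral_div]; congr 1; ext t; ring
    _ = Real.exp (-a^2/2) / a := by rw [tail_eq]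

lemma slab_set_eq (a : ℝ) : {t : ℝ | a ≤ |t|} = Iic (-a) ∪ Ici a := by
  ext t; simp [le_abs, le_neg, mem_Iic, mem_Ici, or_comm]

lemma slab_le (a : ℝ) (ha : 0 < a) :
    ∫ t in {t : ℝ | a ≤ |t|}, Real.exp (-t^2/2) ≤ 2 * Real.exp (-a^2/2) / a := by
  rw [slab_set_eq]
  rw [setIntegral_union (by
        rw [Set.disjoint_iff]
        intro t ⟨h1, h2⟩
        simp only [mem_Iic, mem_Ici] at h1 h2
        exfalso; linarith) measurableSet_Ici int_exp_half.integrableOn int_exp_half.integrableOn]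
  have h1 : ∫ t in Iic (-a), Real.exp (-t^2/2) = ∫ t in Ioi a, Real.exp (-t^2/2) := by
    have : ∀ t : ℝ, Real.exp (-t^2/2) = Real.exp (-(-t)^2/2) := by intro t; ring_nf
    calc ∫ t in Iic (-a), Real.exp (-t^2/2)
        = ∫ t in Iic (-a), Real.exp (-(-t)^2/2) := by simp_rw [← this]
      _ = ∫ t in Ioi a, Real.exp (-t^2/2) := by
            have h2 := integral_comp_neg_Iic (c := -a) (f := fun t => Real.exp (-t^2/2))
            simp only [neg_neg] at h2
            exact h2
  rw [h1, integral_Ici_eq_integral_Ioi]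
  have := tail_le a ha
  have h3 : 2 * Real.exp (-a^2/2)/a = Real.exp (-a^2/2)/a + Real.exp (-a^2/2)/a := by ring
  linarith

lemma gauss_one_dim : ∫ t : ℝ, Real.exp (-t^2/2) = Real.sqrt (2*Real.pi) := by
  have h : (fun t : ℝ => Real.exp (-t^2/2)) = fun t : ℝ => Real.exp (-(1/2)*t^2) := by
    funext t; ring_nf
  rw [h, integral_gaussian]
  congr 1; ring

lemma norm_sq_eq (n : ℕ) (x : En n) : ‖x‖^2 = ∑ j, (x j)^2 := by
  rw [EuclideanSpace.norm_eq, Real.sq_sqrt]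
  · simp [sq_abs]
  · positivity

lemma exp_norm_prod (n : ℕ) (x : En n) :
    Real.exp (-‖x‖^2/2) = ∏ j, Real.exp (-(x j)^2/2) := by
  rw [norm_sq_eq, ← Real.exp_sum]
  congr 1
  rw [← Finset.sum_neg_distrib, ← Finset.sum_div]

lemma int_global (n : ℕ) : Integrable (fun x : En n => Real.exp (-‖x‖^2/2)) := by
  have h := (GaussianFourier.integrable_cexp_neg_mul_sq_norm_add (V := En n) (b := (1/2:ℂ))
    (by norm_num) 0 0).norm
  apply h.congr
  filter_upwards with v
  rw [Complex.norm_exp]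
  congr 1
  simp
  norm_cast
  ring

lemma coord_meas (n : ℕ) (i : Fin n) (a : ℝ) :
    MeasurableSet {x : En n | a ≤ |x i|} := by
  have : Continuous fun x : En n => |x i| := by fun_prop
  exact isClosed_le continuous_const this |>.measurableSet

lemma slab_En (n : ℕ) (a : ℝ) (i : Fin n) :
    ∫ x in {x : En n | a ≤ |x i|}, Real.exp (-‖x‖^2/2)
      = (∫ t in {t : ℝ | a ≤ |t|}, Real.exp (-t^2/2)) * (Real.sqrt (2*Real.pi))^(n-1) := by
  classical
  set g : Fin n → ℝ → ℝ := fun j t =>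
    if j = i then Set.indicator {s : ℝ | a ≤ |s|} (fun s => Real.exp (-s^2/2)) t
    else Real.exp (-t^2/2) with hg
  have hP := (EuclideanSpace.volume_preserving_symm_measurableEquiv_toLp (Fin n)).symm
  rw [← integral_indicator (coord_meas n i a),
      ← hP.integral_comp (MeasurableEquiv.measurableEmbedding _)]
  have key : ∀ y : Fin n → ℝ,
      Set.indicator {x : En n | a ≤ |x i|} (fun x => Real.exp (-‖x‖^2/2))
        ((MeasurableEquiv.toLp 2 (Fin n → ℝ)).symm.symm y) = ∏ j, g j (y j) := by
    intro y
    have hcoord : ∀ j, ((MeasurableEquiv.toLp 2 (Fin n → ℝ)).symm.symm y) j = y j := by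
      intro j; rfl
    by_cases h : a ≤ |y i|
    · rw [Set.indicator_of_mem (show _ ∈ {x : En n | a ≤ |x i|} by simpa [hcoord] using h),
        exp_norm_prod]
      simp only [hcoord]
      refine Finset.prod_congr rfl fun j _ => ?_
      by_cases hj : j = i
      · subst hj; rw [hg]; simp only [if_pos rfl, if_true]
        simp [Set.indicator_apply, Set.mem_setOf_eq, h]
      · rw [hg]; simp only [if_neg hj]
    · rw [Set.indicator_of_notMem (show _ ∉ {x : En n | a ≤ |x i|} by simpa [hcoord] using h)]
      symm
      apply Finset.prod_eq_zero (Finset.mem_univ i)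
      rw [hg]; simp only [if_pos rfl, if_true]
      simp [Set.indicator_apply, Set.mem_setOf_eq, h]
  simp_rw [key]
  rw [MeasureTheory.integral_fintype_prod_volume_eq_prod (ι := Fin n) g]
  rw [← Finset.mul_prod_erase Finset.univ _ (Finset.mem_univ i)]
  have h1 : ∫ t, g i t = ∫ t in {t : ℝ | a ≤ |t|}, Real.exp (-t^2/2) := by
    rw [hg]; simp only [if_pos rfl, if_true]
    rw [integral_indicator]
    have : Continuous fun t : ℝ => |t| := by fun_prop
    exact (isClosed_le continuous_const this).measurableSet
  have h2 : ∏ j ∈ Finset.univ.erase i, (∫ t, g j t) = (Real.sqrt (2*Real.pi))^(n-1) := by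
    rw [Finset.prod_congr rfl (fun j hj => ?_), Finset.prod_const, Finset.card_erase_of_mem
      (Finset.mem_univ i), Finset.card_univ, Fintype.card_fin]
    rw [hg]; simp only [if_neg (Finset.mem_erase.1 hj).1]
    exact gauss_one_dim
  rw [h1, h2]

lemma gauss_K_bound {n : ℕ} (hn : 1 ≤ n) (K : Set (En n)) (hKm : MeasurableSet K)
    (d : ℝ) (hd0 : 0 < d) (hnorm : ∀ x ∈ K, d ≤ ‖x‖) :
    gaussianMeasure n K ≤
      2 * n * Real.sqrt n / (Real.sqrt (2 * Real.pi) * d) * Real.exp (-d ^ 2 / (2 * n)) := by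
  have hn0 : (0:ℝ) < n := by exact_mod_cast hn
  have hsn : (0:ℝ) < Real.sqrt n := Real.sqrt_pos.2 hn0
  set a : ℝ := d / Real.sqrt n with ha_def
  have ha : 0 < a := div_pos hd0 hsn
  have ha2 : a^2 = d^2 / n := by
    rw [ha_def, div_pow, Real.sq_sqrt hn0.le]
  -- K is covered by the slabs
  have hsub : K ⊆ ⋃ i, {x : En n | a ≤ |x i|} := by
    intro x hx
    by_contra hcon
    simp only [mem_iUnion, mem_setOf_eq, not_exists, not_le] at hcon
    have h1 : ‖x‖^2 < d^2 := by
      rw [norm_sq_eq]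
      calc ∑ j, (x j)^2 < ∑ _j : Fin n, a^2 := by
            apply Finset.sum_lt_sum_of_nonempty
            · haveI : Nonempty (Fin n) := Fin.pos_iff_nonempty.1 (by omega)
              exact Finset.univ_nonempty
            · intro j _
              have := hcon j
              calc (x j)^2 = |x j|^2 := (sq_abs _).symm
                _ < a^2 := by
                  apply pow_lt_pow_left₀ this (abs_nonneg _)
                  norm_num
        _ = n * a^2 := by rw [Finset.sum_const, Finset.card_univ, Fintype.card_fin]; simp
        _ = d^2 := by rw [ha2]; field_simp
    have h2 : d ≤ ‖x‖ := hnorm x hx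
    nlinarith [norm_nonneg x]
  -- integral over K bounded by sum of slab integrals
  have hIker : ∫ x in K, Real.exp (-‖x‖^2/2) ≤
      ∑ i : Fin n, ∫ x in {x : En n | a ≤ |x i|}, Real.exp (-‖x‖^2/2) := by
    have hglob := int_global n
    calc ∫ x in K, Real.exp (-‖x‖^2/2)
        = ∫ x, K.indicator (fun x => Real.exp (-‖x‖^2/2)) x := by
          rw [integral_indicator hKm]
      _ ≤ ∫ x, ∑ i : Fin n, ({x : En n | a ≤ |x i|}).indicator
            (fun x => Real.exp (-‖x‖^2/2)) x := by
          apply integral_mono (hglob.indicator hKm)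
            (integrable_finset_sum _ fun i _ => hglob.indicator (coord_meas n i a))
          intro x
          by_cases hx : x ∈ K
          · rw [Set.indicator_of_mem hx]
            obtain ⟨i, hi⟩ := mem_iUnion.1 (hsub hx)
            calc Real.exp (-‖x‖^2/2)
                = ({x : En n | a ≤ |x i|}).indicator (fun x => Real.exp (-‖x‖^2/2)) x := by
                  rw [Set.indicator_of_mem hi]
              _ ≤ ∑ i : Fin n, ({x : En n | a ≤ |x i|}).indicator
                    (fun x => Real.exp (-‖x‖^2/2)) x := by
                  apply Finset.single_le_sum (f := fun i =>
                    ({x : En n | a ≤ |x i|}).indicator (fun x => Real.exp (-‖x‖^2/2)) x)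
                    (fun j _ => Set.indicator_nonneg (fun y _ => (Real.exp_pos _).le) x)
                    (Finset.mem_univ i)
          · rw [Set.indicator_of_notMem hx]
            exact Finset.sum_nonneg fun j _ =>
              Set.indicator_nonneg (fun y _ => (Real.exp_pos _).le) x
      _ = ∑ i : Fin n, ∫ x in {x : En n | a ≤ |x i|}, Real.exp (-‖x‖^2/2) := by
          rw [integral_finset_sum _ fun i _ => hglob.indicator (coord_meas n i a)]
          exact Finset.sum_congr rfl fun i _ => integral_indicator (coord_meas n i a)
  have hc0 : (0:ℝ) ≤ (2 * Real.pi) ^ (-(n : ℝ) / 2) := by positivity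
  have hs0 : (0:ℝ) < Real.sqrt (2*Real.pi) := Real.sqrt_pos.2 (by positivity)
  -- combine
  have key : gaussianMeasure n K ≤ (2 * Real.pi) ^ (-(n : ℝ) / 2) *
      ((n : ℝ) * ((2 * Real.exp (-a^2/2) / a) * (Real.sqrt (2*Real.pi))^(n-1))) := by
    unfold gaussianMeasure
    have h3 : ∫ x in K, Real.exp (-‖x‖ ^ 2 / 2) ≤
        (n : ℝ) * ((2 * Real.exp (-a^2/2) / a) * (Real.sqrt (2*Real.pi))^(n-1)) := by
      refine hIker.trans ?_
      have : ∀ i : Fin n, ∫ x in {x : En n | a ≤ |x i|}, Real.exp (-‖x‖^2/2) ≤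
          (2 * Real.exp (-a^2/2) / a) * (Real.sqrt (2*Real.pi))^(n-1) := by
        intro i
        rw [slab_En]
        apply mul_le_mul_of_nonneg_right (slab_le a ha) (by positivity)
      calc ∑ i : Fin n, ∫ x in {x : En n | a ≤ |x i|}, Real.exp (-‖x‖^2/2)
          ≤ ∑ _i : Fin n, (2 * Real.exp (-a^2/2) / a) * (Real.sqrt (2*Real.pi))^(n-1) :=
            Finset.sum_le_sum fun i _ => this i
        _ = (n : ℝ) * ((2 * Real.exp (-a^2/2) / a) * (Real.sqrt (2*Real.pi))^(n-1)) := by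
            rw [Finset.sum_const, Finset.card_univ, Fintype.card_fin]; simp
    exact mul_le_mul_of_nonneg_left h3 hc0
  refine key.trans_eq ?_
  -- arithmetic identity
  have hexp : Real.exp (-a^2/2) = Real.exp (-d^2/(2*n)) := by
    rw [ha2]; ring_nf
  have hcs : (2 * Real.pi) ^ (-(n : ℝ) / 2) * (Real.sqrt (2*Real.pi))^(n-1) =
      (Real.sqrt (2*Real.pi))⁻¹ := by
    rw [Real.sqrt_eq_rpow, ← Real.rpow_natCast ((2*Real.pi) ^ ((1:ℝ)/2)) (n-1),
      ← Real.rpow_mul (by positivity), ← Real.rpow_add (by positivity),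
      ← Real.rpow_neg (by positivity)]
    congr 1
    rw [Nat.cast_sub hn]
    push_cast
    ring
  have hainv : a⁻¹ = Real.sqrt n / d := by
    rw [ha_def]
    field_simp
  rw [hexp]
  rw [show (2 * Real.pi) ^ (-(n : ℝ) / 2) *
      ((n : ℝ) * ((2 * Real.exp (-d^2/(2*n)) / a) * (Real.sqrt (2*Real.pi))^(n-1))) =
      ((2 * Real.pi) ^ (-(n : ℝ) / 2) * (Real.sqrt (2*Real.pi))^(n-1)) *
      ((n : ℝ) * 2 * Real.exp (-d^2/(2*n)) * a⁻¹) from by ring]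
  rw [hcs, hainv]
  field_simp

end AuxLemmas

/-- For `p < 0`, a nonzero finite Borel measure `μ` on a nonempty compact `ω ⊆ Ω`, and a
`C`-pseudo-cone `K` with `d = dist(0,K) > 0`:
`γⁿ(K) / ∫_ω (-h_K)^p dμ ≤ (2n√n/(√(2π) d)) e^{-d²/(2n)} d^{-p} / μ(ω)`. -/
theorem phi_mu_upper_estimate {n : ℕ} (hn : 1 ≤ n) (C : Set (En n)) (hC : IsPointedCone C)
    (ω : Set (En n)) (hω : ω.Nonempty) (hωc : IsCompact ω) (hωΩ : ω ⊆ OmegaSet C)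
    (μ : Measure (En n)) [IsFiniteMeasure μ] (hμsupp : μ ωᶜ = 0) (hμ : μ ω ≠ 0)
    (p : ℝ) (hp : p < 0)
    (K : Set (En n)) (hK : IsCPseudoCone C K)
    (d : ℝ) (hd : d = Metric.infDist 0 K) (hd0 : 0 < d) :
    gaussianMeasure n K / ∫ u in ω, (-suppFn K u) ^ p ∂μ ≤
      2 * n * Real.sqrt n / (Real.sqrt (2 * Real.pi) * d) * Real.exp (-d ^ 2 / (2 * n)) *
        d ^ (-p) / (μ ω).toReal := by
  classical
  -- basic components of the pseudo-cone hypothesis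
  obtain ⟨⟨hKne, hKcl, hKconv, hK0, hKsmul⟩, hKrec⟩ := hK
  have hKm : MeasurableSet K := hKcl.measurableSet
  -- K ⊆ C
  have hKsubC : K ⊆ C := by
    rw [← hKrec]
    intro x hx y hy
    have hmid : (1/2 : ℝ) • y + (1/2 : ℝ) • x ∈ K :=
      hKconv hy hx (by norm_num) (by norm_num) (by norm_num)
    have h2 : (2 : ℝ) • ((1/2 : ℝ) • y + (1/2 : ℝ) • x) ∈ K :=
      hKsmul 2 (by norm_num) ⟨_, hmid, rfl⟩
    have heq : (2 : ℝ) • ((1/2 : ℝ) • y + (1/2 : ℝ) • x) = y + x := by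
      rw [smul_add, smul_smul, smul_smul]
      norm_num
    rwa [heq] at h2
  -- every point of K has norm at least d
  have hnorm : ∀ x ∈ K, d ≤ ‖x‖ := by
    intro x hx
    rw [hd]
    calc Metric.infDist 0 K ≤ dist 0 x := Metric.infDist_le_dist_of_mem hx
      _ = ‖x‖ := by simp
  -- the nearest point to the origin
  obtain ⟨x₀, hx₀K, hx₀d⟩ := hKcl.exists_infDist_eq_dist hKne 0
  have hx₀norm : ‖x₀‖ = d := by rw [hd, hx₀d]; simp
  -- support function facts on ω
  have hbdd : ∀ u ∈ ω, BddAbove ((fun x => ⟪x, u⟫) '' K) := by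
    intro u hu
    refine ⟨0, ?_⟩
    rintro v ⟨x, hx, rfl⟩
    have hupc : u ∈ polarCone C := interior_subset (hωΩ hu).2
    have := hupc x (hKsubC hx)
    rwa [real_inner_comm] at this
  have hlow : ∀ u ∈ ω, -d ≤ suppFn K u := by
    intro u hu
    have hu1 : ‖u‖ = 1 := mem_sphere_zero_iff_norm.1 (hωΩ hu).1
    have h1 : -d ≤ ⟪x₀, u⟫ := by
      have h2 := abs_real_inner_le_norm x₀ u
      rw [hx₀norm, hu1, mul_one] at h2
      have := neg_abs_le ⟪x₀, u⟫
      linarith [abs_le.1 h2]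
    exact h1.trans (le_csSup (hbdd u hu) ⟨x₀, hx₀K, rfl⟩)
  have hneg : ∀ u ∈ ω, suppFn K u < 0 := by
    intro u hu
    obtain ⟨ε, hε, hball⟩ := Metric.mem_nhds_iff.1
      (mem_interior_iff_mem_nhds.1 (hωΩ hu).2)
    have hbound : ∀ v ∈ (fun x => ⟪x, u⟫) '' K, v ≤ -(ε/2 * d) := by
      rintro v ⟨x, hx, rfl⟩
      have hxd : d ≤ ‖x‖ := hnorm x hx
      have hx0 : (0:ℝ) < ‖x‖ := lt_of_lt_of_le hd0 hxd
      set w : En n := u + (ε/2) • (‖x‖⁻¹ • x) with hw_def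
      have hwball : w ∈ ball u ε := by
        rw [mem_ball, dist_eq_norm, hw_def]
        have harr : u + (ε / 2) • (‖x‖⁻¹ • x) - u = (ε/2) • (‖x‖⁻¹ • x) :=
          add_sub_cancel_left u _
        rw [harr, norm_smul, norm_smul, norm_inv, norm_norm,
          inv_mul_cancel₀ (ne_of_gt hx0)]
        simp only [Real.norm_eq_abs, abs_of_pos (by linarith : (0:ℝ) < ε/2), mul_one]
        linarith
      have hwp : ⟪w, x⟫ ≤ 0 := hball hwball x (hKsubC hx)
      rw [hw_def, inner_add_left, real_inner_smul_left, real_inner_smul_left,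
        real_inner_self_eq_norm_sq] at hwp
      have hids : ‖x‖⁻¹ * ‖x‖^2 = ‖x‖ := by
        field_simp
      rw [hids] at hwp
      have h3 : ⟪u, x⟫ ≤ -(ε/2 * ‖x‖) := by linarith
      have h4 : ε/2 * d ≤ ε/2 * ‖x‖ := by nlinarith
      show (inner ℝ x u : ℝ) ≤ -(ε/2 * d)
      rw [real_inner_comm]
      linarith
    have h5 : suppFn K u ≤ -(ε/2 * d) :=
      csSup_le (hKne.image _) hbound
    have h6 : (0:ℝ) < ε/2 * d := by positivity
    linarith
  -- pointwise lower bound on the integrand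
  have hfl : ∀ u ∈ ω, d ^ p ≤ (-suppFn K u) ^ p := by
    intro u hu
    have h1 : 0 < -suppFn K u := by linarith [hneg u hu]
    have h2 : -suppFn K u ≤ d := by linarith [hlow u hu]
    exact Real.rpow_le_rpow_of_nonpos h1 h2 hp.le
  have hμω : 0 < (μ ω).toReal := ENNReal.toReal_pos hμ (measure_ne_top μ ω)
  have hG0 : 0 ≤ gaussianMeasure n K := by
    unfold gaussianMeasure
    exact mul_nonneg (by positivity)
      (setIntegral_nonneg hKm fun x _ => (Real.exp_pos _).le)
  have hGB := gauss_K_bound hn K hKm d hd0 hnorm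
  by_cases hInt : Integrable (fun u => (-suppFn K u) ^ p) (μ.restrict ω)
  · -- the integral is bounded below by d^p * μ(ω)
    have hIlow : d ^ p * (μ ω).toReal ≤ ∫ u in ω, (-suppFn K u) ^ p ∂μ := by
      have := setIntegral_ge_of_const_le_real (c := d ^ p) hωc.measurableSet
        (measure_ne_top μ ω) hfl hInt
      exact this
    have hdp : (0:ℝ) < d ^ p := Real.rpow_pos_of_pos hd0 p
    have hI0 : 0 < d ^ p * (μ ω).toReal := mul_pos hdp hμω
    calc gaussianMeasure n K / ∫ u in ω, (-suppFn K u) ^ p ∂μ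
        ≤ gaussianMeasure n K / (d ^ p * (μ ω).toReal) :=
          div_le_div_of_nonneg_left hG0 hI0 hIlow
      _ ≤ (2 * n * Real.sqrt n / (Real.sqrt (2 * Real.pi) * d) *
            Real.exp (-d ^ 2 / (2 * n))) / (d ^ p * (μ ω).toReal) := by
          apply div_le_div_of_nonneg_right hGB hI0.le
      _ = 2 * n * Real.sqrt n / (Real.sqrt (2 * Real.pi) * d) *
            Real.exp (-d ^ 2 / (2 * n)) * d ^ (-p) / (μ ω).toReal := by
          rw [Real.rpow_neg hd0.le]
          field_simp
  · rw [integral_undef hInt, div_zero]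
    positivity
end

section
/- Let C ⊆ ℝⁿ be a pointed n-dimensional closed convex cone. Then the set A = ⋂_{u ∈ S^{n-1} ∩ C°} {x ∈ ℝⁿ : ⟨x,u⟩ ≤ −1} has strictly positive Gaussian measure: γⁿ(A) > 0. -/
open MeasureTheory Metric Set Filter
open scoped RealInnerProductSpace Pointwise Topology ENNReal

/-- The Gaussian density is integrable on `ℝⁿ`. -/
lemma integrable_gaussian_density (n : ℕ) :
    Integrable (fun x : En n => Real.exp (-‖x‖ ^ 2 / 2)) := by
  have h := (GaussianFourier.integrable_cexp_neg_mul_sq_norm_add (V := En n)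
    (b := (1/2 : ℂ)) (by norm_num) 0 (0 : En n)).re
  convert h using 2 with x
  have : (-(1/2 : ℂ) * (‖x‖ : ℂ)^2 + 0 * (⟪(0 : En n), x⟫ : ℝ)) =
      ((-‖x‖^2/2 : ℝ) : ℂ) := by push_cast; ring
  rw [this, ← Complex.ofReal_exp]
  simp only [RCLike.re_to_complex]
  exact (Complex.ofReal_re _).symm

/-- For a pointed `n`-dimensional closed convex cone `C`, the set
`A = ⋂_{u ∈ S^{n-1} ∩ C°} {x : ⟨x,u⟩ ≤ -1}` has positive Gaussian measure. -/
theorem gaussianMeasure_A_pos {n : ℕ} (hn : 1 ≤ n) (C : Set (En n)) (hC : IsPointedCone C) :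
    0 < gaussianMeasure n
      (⋂ u ∈ sphere (0 : En n) 1 ∩ polarCone C, {x : En n | ⟪x, u⟫ ≤ -1}) := by
  obtain ⟨hclosed, hconv, hcone, ⟨z, hz⟩, hpointed⟩ := hC
  obtain ⟨ε, hε, hball⟩ := Metric.isOpen_iff.1 isOpen_interior z hz
  have hballC : ball z ε ⊆ C := hball.trans interior_subset
  set A := (⋂ u ∈ sphere (0 : En n) 1 ∩ polarCone C, {x : En n | ⟪x, u⟫ ≤ -1}) with hA
  -- key estimate: for u in the sphere ∩ polar cone, ⟪z,u⟫ ≤ -ε/2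
  have key : ∀ u ∈ sphere (0 : En n) 1 ∩ polarCone C, ⟪z, u⟫ ≤ -(ε/2) := by
    rintro u ⟨hu1, hu2⟩
    have hun : ‖u‖ = 1 := by simpa using hu1
    have hz' : z + (ε/2) • u ∈ C := by
      apply hballC
      simp only [mem_ball, dist_eq_norm]
      rw [add_sub_cancel_left, norm_smul, hun]
      simp only [Real.norm_eq_abs, abs_of_pos (by linarith : (0:ℝ) < ε/2), mul_one]
      linarith
    have h0 := hu2 _ hz'
    rw [inner_add_right, real_inner_smul_right, real_inner_self_eq_norm_sq, hun] at h0
    rw [real_inner_comm]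
    nlinarith
  -- the ball of radius 1 around (4/ε) • z is contained in A
  have hsub : ball ((4/ε) • z) 1 ⊆ A := by
    intro x hx
    rw [hA]
    simp only [mem_iInter, mem_setOf_eq]
    rintro u hu
    have hun : ‖u‖ = 1 := by simpa using hu.1
    have h1 : ⟪(4/ε) • z, u⟫ ≤ -2 := by
      rw [real_inner_smul_left]
      have h2 : (4/ε) * ⟪z,u⟫ ≤ (4/ε) * (-(ε/2)) :=
        mul_le_mul_of_nonneg_left (key u hu) (by positivity)
      have h3 : (4/ε) * (-(ε/2)) = -2 := by field_simp; ring
      linarith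
    have h2 : ⟪x - (4/ε) • z, u⟫ ≤ 1 := by
      calc ⟪x - (4/ε) • z, u⟫ ≤ ‖x - (4/ε) • z‖ * ‖u‖ := real_inner_le_norm _ _
        _ ≤ 1 := by
            rw [hun, mul_one]
            have := mem_ball.1 hx
            rw [dist_eq_norm] at this
            linarith
    have h3 : ⟪x - (4/ε) • z, u⟫ = ⟪x, u⟫ - ⟪(4/ε) • z, u⟫ := inner_sub_left _ _ _
    linarith
  -- A is closed, hence measurable
  have hAclosed : IsClosed A := by
    rw [hA]
    refine isClosed_biInter fun u _ => ?_
    exact isClosed_le (Continuous.inner continuous_id continuous_const) continuous_const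
  -- positivity
  have hfi := integrable_gaussian_density n
  have hnonneg : ∀ x : En n, 0 ≤ Real.exp (-‖x‖ ^ 2 / 2) := fun x => (Real.exp_pos _).le
  have hballpos : 0 < ∫ x in ball ((4/ε) • z) 1, Real.exp (-‖x‖ ^ 2 / 2) := by
    rw [setIntegral_pos_iff_support_of_nonneg_ae
      (Filter.Eventually.of_forall fun x => hnonneg x) hfi.integrableOn]
    have hsup : Function.support (fun x : En n => Real.exp (-‖x‖ ^ 2 / 2)) = Set.univ :=
      Set.eq_univ_of_forall fun x => (Real.exp_pos _).ne'
    rw [hsup, Set.univ_inter]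
    exact measure_ball_pos _ _ one_pos
  have hmono : ∫ x in ball ((4/ε) • z) 1, Real.exp (-‖x‖ ^ 2 / 2)
      ≤ ∫ x in A, Real.exp (-‖x‖ ^ 2 / 2) :=
    setIntegral_mono_set hfi.integrableOn
      (Filter.Eventually.of_forall fun x => hnonneg x) hsub.eventuallyLE
  unfold gaussianMeasure
  have hc : (0:ℝ) < (2 * Real.pi) ^ (-(n : ℝ) / 2) :=
    Real.rpow_pos_of_pos (by positivity) _
  exact mul_pos hc (lt_of_lt_of_le hballpos hmono)
end

section
/- Let C ⊆ ℝⁿ be a pointed n-dimensional closed convex cone, ω ⊆ Ω = S^{n-1} ∩ int C° a nonempty compact set, μ a nonzero finite Borel measure on ω, and p > 0. Then there exists K ∈ 𝒦(C,ω) such that for every continuous f : ω → (0,∞), γⁿ([f]) · ∫_ω f(u)^p dμ(u) ≤ γⁿ(K) · ∫_ω (−h_K(u))^p dμ(u); that is, the functional I_μ(f) = γⁿ([f]) ∫_ω f^p dμ attains its supremum over C⁺(ω) at the (absolute) support function of some K ∈ 𝒦(C,ω). -/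
open MeasureTheory Metric Set Filter
open scoped RealInnerProductSpace Pointwise Topology ENNReal

noncomputable section Aux

variable {n : ℕ} {C ω : Set (En n)} {f f' : En n → ℝ}

lemma mem_wulffShape {y : En n} :
    y ∈ wulffShape C ω f ↔ y ∈ C ∧ ∀ u ∈ ω, ⟪y, u⟫ ≤ -f u := by
  simp [wulffShape]

lemma wulffShape_congr (h : ∀ u ∈ ω, f u = f' u) :
    wulffShape C ω f = wulffShape C ω f' := by
  ext y
  simp only [mem_wulffShape]
  exact ⟨fun ⟨h1, h2⟩ => ⟨h1, fun u hu => (h u hu) ▸ h2 u hu⟩,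
    fun ⟨h1, h2⟩ => ⟨h1, fun u hu => (h u hu) ▸ h2 u hu⟩⟩

lemma wulffShape_anti (h : ∀ u ∈ ω, f u ≤ f' u) :
    wulffShape C ω f' ⊆ wulffShape C ω f := by
  intro y hy
  rw [mem_wulffShape] at hy ⊢
  exact ⟨hy.1, fun u hu => le_trans (hy.2 u hu) (by linarith [h u hu])⟩

lemma isClosed_wulffShape (hC : IsClosed C) : IsClosed (wulffShape C ω f) :=
  hC.inter (isClosed_biInter fun u _ =>
    isClosed_le (continuous_id.inner continuous_const) continuous_const)

lemma convex_wulffShape (hC : Convex ℝ C) : Convex ℝ (wulffShape C ω f) :=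
  hC.inter (convex_iInter₂ fun u _ => convex_halfSpace_le
    ⟨fun a b => inner_add_left a b u, fun c x => real_inner_smul_left x u c⟩ _)

lemma integrable_gaussian (n : ℕ) (b : ℝ) (hb : 0 < b) :
    Integrable (fun x : En n => Real.exp (-‖x‖ ^ 2 / b)) := by
  have h := (GaussianFourier.integrable_cexp_neg_mul_sq_norm_add_of_euclideanSpace
    (ι := Fin n) (b := (b⁻¹ : ℂ)) (by simpa using inv_pos.mpr hb) 0 0).norm
  have heq : (fun v : En n => ‖Complex.exp (-(b⁻¹:ℂ) * (‖v‖:ℂ) ^ 2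
      + 0 * ((inner ℝ (0:En n) v : ℝ) : ℂ))‖) = fun x : En n => Real.exp (-‖x‖ ^ 2 / b) := by
    funext x
    rw [Complex.norm_exp]
    congr 1
    simp [Complex.add_re, Complex.mul_re, ← Complex.ofReal_pow]
    ring
  rwa [heq] at h

lemma bddAbove_inner_image {K : Set (En n)} {ρ : ℝ} (hρ0 : 0 ≤ ρ)
    (hsep : ∀ u ∈ ω, ∀ x ∈ C, ⟪x, u⟫ ≤ -(ρ * ‖x‖)) (hKC : K ⊆ C) {u : En n} (hu : u ∈ ω) :
    BddAbove ((fun x => ⟪x, u⟫) '' K) := by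
  refine ⟨0, ?_⟩
  rintro _ ⟨x, hx, rfl⟩
  have h1 := hsep u hu x (hKC hx)
  nlinarith [norm_nonneg x]

lemma le_suppFn_of_mem {K : Set (En n)} {ρ : ℝ} (hρ0 : 0 ≤ ρ)
    (hsep : ∀ u ∈ ω, ∀ x ∈ C, ⟪x, u⟫ ≤ -(ρ * ‖x‖)) (hKC : K ⊆ C) {u : En n} (hu : u ∈ ω)
    {x : En n} (hx : x ∈ K) : ⟪x, u⟫ ≤ suppFn K u :=
  le_csSup (bddAbove_inner_image hρ0 hsep hKC hu) ⟨x, hx, rfl⟩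

lemma suppFn_le_of_forall {K : Set (En n)} (hne : K.Nonempty) {u : En n} {c : ℝ}
    (h : ∀ x ∈ K, ⟪x, u⟫ ≤ c) : suppFn K u ≤ c :=
  csSup_le (hne.image _) (by rintro _ ⟨x, hx, rfl⟩; exact h x hx)

/-- Lower/upper bounds for `-h_K` on `ω`, where `d` is the distance from `0` to `K`. -/
lemma suppFn_bounds {K : Set (En n)} {ρ d : ℝ} (hρ0 : 0 ≤ ρ)
    (hsep : ∀ u ∈ ω, ∀ x ∈ C, ⟪x, u⟫ ≤ -(ρ * ‖x‖)) (hKC : K ⊆ C)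
    (hunit : ∀ u ∈ ω, ‖u‖ = 1) (hne : K.Nonempty)
    (hdle : ∀ x ∈ K, d ≤ ‖x‖) {x₀ : En n} (hx₀ : x₀ ∈ K) (hx₀n : ‖x₀‖ = d)
    {u : En n} (hu : u ∈ ω) : ρ * d ≤ -suppFn K u ∧ -suppFn K u ≤ d := by
  constructor
  · have h0 : suppFn K u ≤ -(ρ * d) := by
      refine suppFn_le_of_forall hne fun x hx => le_trans (hsep u hu x (hKC hx)) ?_
      have := hdle x hx
      nlinarith
    linarith
  · have h1 : -(‖x₀‖ * ‖u‖) ≤ ⟪x₀, u⟫ := neg_le_of_abs_le (abs_real_inner_le_norm x₀ u)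
    have h2 := le_suppFn_of_mem hρ0 hsep hKC hu hx₀
    rw [hunit u hu, hx₀n] at h1
    linarith

lemma suppFn_lipschitzOnWith {K : Set (En n)} {ρ d : ℝ} (hρ0 : 0 < ρ) (hd0 : 0 ≤ d)
    (hsep : ∀ u ∈ ω, ∀ x ∈ C, ⟪x, u⟫ ≤ -(ρ * ‖x‖)) (hKC : K ⊆ C)
    (hunit : ∀ u ∈ ω, ‖u‖ = 1) (hne : K.Nonempty)
    (hdle : ∀ x ∈ K, d ≤ ‖x‖) {x₀ : En n} (hx₀ : x₀ ∈ K) (hx₀n : ‖x₀‖ = d) :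
    LipschitzOnWith (d / ρ).toNNReal (fun u => -suppFn K u) ω := by
  have key : ∀ u ∈ ω, ∀ v ∈ ω, suppFn K u ≤ suppFn K v + (d / ρ) * ‖u - v‖ := by
    intro u hu v hv
    refine suppFn_le_of_forall hne fun x hx => ?_
    by_cases hc : ‖x‖ ≤ d / ρ
    · have h1 : ⟪x, u⟫ = ⟪x, v⟫ + ⟪x, u - v⟫ := by
        rw [inner_sub_right]; ring
      have h2 : ⟪x, v⟫ ≤ suppFn K v := le_suppFn_of_mem hρ0.le hsep hKC hv hx
      have h3 : ⟪x, u - v⟫ ≤ ‖x‖ * ‖u - v‖ := real_inner_le_norm x (u - v)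
      have h4 : ‖x‖ * ‖u - v‖ ≤ (d / ρ) * ‖u - v‖ :=
        mul_le_mul_of_nonneg_right hc (norm_nonneg _)
      linarith
    · push_neg at hc
      have h1 : ⟪x, u⟫ ≤ -(ρ * ‖x‖) := hsep u hu x (hKC hx)
      have h2 : -d ≤ suppFn K v := by
        linarith [(suppFn_bounds hρ0.le hsep hKC hunit hne hdle hx₀ hx₀n hv).2]
      have h3 : d < ρ * ‖x‖ := by
        rw [div_lt_iff₀ hρ0] at hc
        linarith [mul_comm ‖x‖ ρ]
      have h5 : 0 ≤ (d / ρ) * ‖u - v‖ := by positivity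
      linarith
  refine LipschitzOnWith.of_dist_le_mul fun u hu v hv => ?_
  rw [Real.dist_eq, Real.coe_toNNReal _ (by positivity), dist_eq_norm]
  have k1 := key u hu v hv
  have k2 := key v hv u hu
  have hsymm : ‖v - u‖ = ‖u - v‖ := norm_sub_rev v u
  rw [hsymm] at k2
  rw [abs_le]
  constructor <;> [skip; skip] <;> linarith

lemma sep_of_compact (hωc : IsCompact ω) (hωΩ : ω ⊆ OmegaSet C) :
    ∃ ρ : ℝ, 0 < ρ ∧ ρ ≤ 1 ∧ ∀ u ∈ ω, ∀ x ∈ C, ⟪x, u⟫ ≤ -(ρ * ‖x‖) := by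
  have hsub : ω ⊆ interior (polarCone C) := fun u hu => (hωΩ hu).2
  obtain ⟨δ, hδ0, hδ⟩ := hωc.exists_cthickening_subset_open isOpen_interior hsub
  refine ⟨min δ 1, lt_min hδ0 one_pos, min_le_right _ _, ?_⟩
  intro u hu x hx
  rcases eq_or_ne x 0 with rfl | hx0
  · simp
  · have hxn : 0 < ‖x‖ := norm_pos_iff.mpr hx0
    set ρ : ℝ := min δ 1 with hρdef
    have hρ0 : 0 < ρ := lt_min hδ0 one_pos
    have hz : u + ρ • (‖x‖⁻¹ • x) ∈ cthickening δ ω := by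
      apply mem_cthickening_of_dist_le _ u δ ω hu
      have : dist (u + ρ • (‖x‖⁻¹ • x)) u = ‖ρ • (‖x‖⁻¹ • x)‖ := by
        rw [dist_eq_norm]; congr 1; abel
      rw [this, norm_smul, norm_smul, norm_inv, norm_norm]
      rw [inv_mul_cancel₀ hxn.ne', mul_one, Real.norm_eq_abs, abs_of_pos hρ0]
      exact min_le_left _ _
    have hz2 : u + ρ • (‖x‖⁻¹ • x) ∈ polarCone C := interior_subset (hδ hz)
    have h3 := hz2 x hx
    rw [inner_add_left, real_inner_smul_left, real_inner_smul_left,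
      real_inner_self_eq_norm_sq] at h3
    have h4 : ‖x‖⁻¹ * ‖x‖ ^ 2 = ‖x‖ := by field_simp
    rw [h4] at h3
    rw [real_inner_comm]
    linarith

lemma exists_deep_ball (hCc : IsClosed C) (hCcone : ∀ x ∈ C, ∀ c : ℝ, 0 ≤ c → c • x ∈ C)
    (hCint : (interior C).Nonempty) (hn : 1 ≤ n) {ρ : ℝ} (hρ0 : 0 < ρ)
    (hsep : ∀ u ∈ ω, ∀ x ∈ C, ⟪x, u⟫ ≤ -(ρ * ‖x‖)) (hunit : ∀ u ∈ ω, ‖u‖ = 1)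
    (T r : ℝ) (hT : 0 < T) (hr : 0 ≤ r) :
    ∃ x : En n, closedBall x r ⊆ C ∧ ∀ u ∈ ω, ∀ y ∈ closedBall x r, ⟪y, u⟫ ≤ -T := by
  obtain ⟨e, heC, hene⟩ : ∃ e, e ∈ interior C ∧ e ≠ 0 := by
    obtain ⟨e₀, he₀⟩ := hCint
    rcases eq_or_ne e₀ 0 with rfl | h
    · obtain ⟨ε, hε0, hball⟩ := Metric.isOpen_iff.mp isOpen_interior 0 he₀
      have hone : ‖EuclideanSpace.single (⟨0, hn⟩ : Fin n) (1:ℝ)‖ = 1 := by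
        rw [EuclideanSpace.norm_single]; norm_num
      refine ⟨(ε/2) • EuclideanSpace.single (⟨0, hn⟩ : Fin n) (1:ℝ), hball ?_, ?_⟩
      · rw [mem_ball_zero_iff, norm_smul, hone, mul_one, Real.norm_eq_abs,
          abs_of_pos (by positivity)]
        linarith
      · apply smul_ne_zero (by positivity)
        intro hcon
        have := congrArg norm hcon
        rw [hone, norm_zero] at this
        norm_num at this
    · exact ⟨e₀, he₀, h⟩
  obtain ⟨ε, hε0, hball⟩ := Metric.isOpen_iff.mp isOpen_interior e heC
  have hen : 0 < ‖e‖ := norm_pos_iff.mpr hene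
  have heCC : e ∈ C := interior_subset heC
  set R : ℝ := max ((T + r) / (ρ * ‖e‖)) (2 * r / ε + 1) with hRdef
  have hRpos : 0 < R := lt_max_of_lt_right (by positivity)
  refine ⟨R • e, ?_, ?_⟩
  · intro y hy
    rw [mem_closedBall, dist_eq_norm] at hy
    have h1 : ‖R⁻¹ • y - e‖ = R⁻¹ * ‖y - R • e‖ := by
      rw [show R⁻¹ • y - e = R⁻¹ • (y - R • e) by
        rw [smul_sub, smul_smul, inv_mul_cancel₀ hRpos.ne', one_smul]]
      rw [norm_smul, Real.norm_eq_abs, abs_of_pos (inv_pos.mpr hRpos)]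
    have h2 : R⁻¹ * ‖y - R • e‖ < ε := by
      have hRb : 2 * r / ε + 1 ≤ R := le_max_right _ _
      have h3 : r < R * ε := by
        have : (2 * r / ε + 1) * ε = 2 * r + ε := by field_simp
        nlinarith [mul_le_mul_of_nonneg_right hRb hε0.le]
      calc R⁻¹ * ‖y - R • e‖ ≤ R⁻¹ * r := by
            apply mul_le_mul_of_nonneg_left hy (inv_pos.mpr hRpos).le
        _ < ε := by rw [inv_mul_lt_iff₀ hRpos]; linarith [h3]
    have h4 : R⁻¹ • y ∈ interior C := hball (by rwa [mem_ball, dist_eq_norm, h1] )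
    have h5 : R • (R⁻¹ • y) ∈ C := hCcone _ (interior_subset h4) R hRpos.le
    rwa [smul_smul, mul_inv_cancel₀ hRpos.ne', one_smul] at h5
  · intro u hu y hy
    rw [mem_closedBall, dist_eq_norm] at hy
    have h1 : ⟪R • e, u⟫ ≤ -(ρ * (R * ‖e‖)) := by
      have := hsep u hu (R • e) (hCcone _ heCC R hRpos.le)
      rwa [norm_smul, Real.norm_eq_abs, abs_of_pos hRpos] at this
    have h2 : ⟪y - R • e, u⟫ ≤ r := by
      calc ⟪y - R • e, u⟫ ≤ ‖y - R • e‖ * ‖u‖ := real_inner_le_norm _ _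
        _ ≤ r := by rw [hunit u hu, mul_one]; exact hy
    have h3 : T + r ≤ ρ * (R * ‖e‖) := by
      have hRa : (T + r) / (ρ * ‖e‖) ≤ R := le_max_left _ _
      have := mul_le_mul_of_nonneg_left hRa (by positivity : (0:ℝ) ≤ ρ * ‖e‖)
      rw [mul_div_cancel₀ _ (by positivity : (ρ * ‖e‖) ≠ 0)] at this
      linarith [this]
    have h4 : ⟪y, u⟫ = ⟪R • e, u⟫ + ⟪y - R • e, u⟫ := by
      rw [← inner_add_left]; congr 1; abel
    linarith

lemma add_mem_of_cone (hCconv : Convex ℝ C) (hCcone : ∀ x ∈ C, ∀ c : ℝ, 0 ≤ c → c • x ∈ C)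
    {x z : En n} (hx : x ∈ C) (hz : z ∈ C) : x + z ∈ C := by
  have hmid : (1/2 : ℝ) • x + (1/2 : ℝ) • z ∈ C :=
    hCconv hx hz (by norm_num) (by norm_num) (by norm_num)
  have h2 := hCcone _ hmid 2 (by norm_num)
  rwa [smul_add, smul_smul, smul_smul, show (2:ℝ) * (1/2) = 1 by norm_num, one_smul,
    one_smul] at h2

lemma recessionCone_wulffShape (hCc : IsClosed C) (hCconv : Convex ℝ C)
    (hCcone : ∀ x ∈ C, ∀ c : ℝ, 0 ≤ c → c • x ∈ C) {ρ : ℝ} (hρ0 : 0 < ρ)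
    (hsep : ∀ u ∈ ω, ∀ x ∈ C, ⟪x, u⟫ ≤ -(ρ * ‖x‖))
    (hne : (wulffShape C ω f).Nonempty) :
    recessionCone (wulffShape C ω f) = C := by
  ext z
  constructor
  · intro hz
    obtain ⟨x₀, hx₀⟩ := hne
    have hmem : ∀ k : ℕ, x₀ + k • z ∈ wulffShape C ω f := by
      intro k
      induction k with
      | zero => simpa using hx₀
      | succ k ih =>
        have := hz _ ih
        rw [succ_nsmul, ← add_assoc]
        exact this
    have hseq : Tendsto (fun k : ℕ => (k:ℝ)⁻¹ • (x₀ + k • z)) atTop (𝓝 z) := by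
      have h0 : Tendsto (fun k : ℕ => (k:ℝ)⁻¹ • x₀ + z) atTop (𝓝 z) := by
        have h1 : Tendsto (fun k : ℕ => (k:ℝ)⁻¹ • x₀) atTop (𝓝 ((0:ℝ) • x₀)) :=
          tendsto_inv_atTop_nhds_zero_nat.smul_const x₀
        rw [zero_smul] at h1
        simpa using h1.add_const z
      apply h0.congr'
      filter_upwards [eventually_ge_atTop 1] with k hk
      have hk0 : (k:ℝ) ≠ 0 := by positivity
      rw [smul_add]
      congr 1
      rw [← Nat.cast_smul_eq_nsmul ℝ k z, smul_smul, inv_mul_cancel₀ hk0, one_smul]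
    refine hCc.mem_of_tendsto hseq (Eventually.of_forall fun k => ?_)
    exact hCcone _ (mem_wulffShape.mp (hmem k)).1 _ (by positivity)
  · intro hz x hx
    rw [mem_wulffShape] at hx ⊢
    refine ⟨add_mem_of_cone hCconv hCcone hx.1 hz, fun u hu => ?_⟩
    rw [inner_add_left]
    have h3 : ⟪z, u⟫ ≤ 0 := by nlinarith [hsep u hu z hz, norm_nonneg z, hρ0]
    linarith [hx.2 u hu]

lemma suppFn_wulff_le (hne : (wulffShape C ω f).Nonempty) {u : En n} (hu : u ∈ ω) :
    suppFn (wulffShape C ω f) u ≤ -f u :=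
  suppFn_le_of_forall hne fun x hx => (mem_wulffShape.mp hx).2 u hu

lemma wulff_determined {ρ : ℝ} (hρ0 : 0 ≤ ρ)
    (hsep : ∀ u ∈ ω, ∀ x ∈ C, ⟪x, u⟫ ≤ -(ρ * ‖x‖))
    (hne : (wulffShape C ω f).Nonempty) :
    wulffShape C ω f = C ∩ ⋂ u ∈ ω, {y | ⟪y, u⟫ ≤ suppFn (wulffShape C ω f) u} := by
  have hsub : wulffShape C ω f ⊆ C := fun a ha => (mem_wulffShape.mp ha).1
  ext y
  simp only [mem_inter_iff, mem_iInter, mem_setOf_eq]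
  constructor
  · intro hy
    exact ⟨(mem_wulffShape.mp hy).1, fun u hu => le_suppFn_of_mem hρ0 hsep hsub hu hy⟩
  · rintro ⟨h1, h2⟩
    exact mem_wulffShape.mpr ⟨h1, fun u hu => (h2 u hu).trans (suppFn_wulff_le hne hu)⟩

lemma wulff_neg_suppFn {ρ : ℝ} (hρ0 : 0 ≤ ρ)
    (hsep : ∀ u ∈ ω, ∀ x ∈ C, ⟪x, u⟫ ≤ -(ρ * ‖x‖))
    (hne : (wulffShape C ω f).Nonempty) :
    wulffShape C ω (fun x => -suppFn (wulffShape C ω f) x) = wulffShape C ω f := by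
  have hsub : wulffShape C ω f ⊆ C := fun a ha => (mem_wulffShape.mp ha).1
  ext y
  rw [mem_wulffShape, mem_wulffShape]
  constructor
  · rintro ⟨h1, h2⟩
    refine ⟨h1, fun u hu => ?_⟩
    have := h2 u hu
    rw [neg_neg] at this
    exact this.trans (suppFn_wulff_le hne hu)
  · rintro ⟨h1, h2⟩
    refine ⟨h1, fun u hu => ?_⟩
    rw [neg_neg]
    exact le_suppFn_of_mem hρ0 hsep hsub hu (mem_wulffShape.mpr ⟨h1, h2⟩)


end Aux

set_option maxHeartbeats 4000000
open scoped BoundedContinuousFunction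

/-- Existence of a maximizer for `I_μ(f) = γⁿ([f]) ∫_ω f^p dμ` (with `p > 0`) over positive
continuous functions on `ω`, attained at the absolute support function of some `K ∈ 𝒦(C,ω)`. -/
theorem exists_maximizer_I_mu {n : ℕ} (hn : 1 ≤ n) (C : Set (En n)) (hC : IsPointedCone C)
    (ω : Set (En n)) (hω : ω.Nonempty) (hωc : IsCompact ω) (hωΩ : ω ⊆ OmegaSet C)
    (μ : Measure (En n)) [IsFiniteMeasure μ] (hμsupp : μ ωᶜ = 0) (hμ : μ ω ≠ 0)
    (p : ℝ) (hp : 0 < p) :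
    ∃ K : Set (En n), InKClass C ω K ∧
      ∀ f : En n → ℝ, ContinuousOn f ω → (∀ u ∈ ω, 0 < f u) →
        gaussianMeasure n (wulffShape C ω f) * ∫ u in ω, f u ^ p ∂μ ≤
          gaussianMeasure n K * ∫ u in ω, (-suppFn K u) ^ p ∂μ := by
  classical
  obtain ⟨hCc, hCconv, hCcone, hCint, hCpointed⟩ := hC
  obtain ⟨ρ, hρ0, hρ1, hsep⟩ := sep_of_compact hωc hωΩ
  have hunit : ∀ u ∈ ω, ‖u‖ = 1 := fun u hu => by
    have h := (hωΩ hu).1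
    rwa [mem_sphere_iff_norm, sub_zero] at h
  have hωmeas : MeasurableSet ω := hωc.isClosed.measurableSet
  have hdeep := exists_deep_ball (ω := ω) hCc hCcone hCint hn hρ0 hsep hunit
  -- Gaussian measure facts
  have hφint : Integrable (fun x : En n => Real.exp (-‖x‖ ^ 2 / 2)) :=
    integrable_gaussian n 2 two_pos
  set κ : ℝ := (2 * Real.pi) ^ (-(n : ℝ) / 2) with hκdef
  have hκ0 : 0 < κ := Real.rpow_pos_of_pos (by positivity) _
  have gm_def : ∀ A : Set (En n),
      gaussianMeasure n A = κ * ∫ x in A, Real.exp (-‖x‖ ^ 2 / 2) := fun A => rfl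
  have gm_nonneg : ∀ A : Set (En n), 0 ≤ gaussianMeasure n A := fun A => by
    rw [gm_def]
    exact mul_nonneg hκ0.le (integral_nonneg fun x => (Real.exp_pos _).le)
  have gm_mono : ∀ {A B : Set (En n)}, A ⊆ B →
      gaussianMeasure n A ≤ gaussianMeasure n B := by
    intro A B hAB
    rw [gm_def, gm_def]
    refine mul_le_mul_of_nonneg_left ?_ hκ0.le
    exact setIntegral_mono_set hφint.integrableOn
      (Eventually.of_forall fun x => (Real.exp_pos _).le) (HasSubset.Subset.eventuallyLE hAB)
  obtain ⟨Γ, hΓdef⟩ : ∃ x : ℝ, x = gaussianMeasure n univ := ⟨_, rfl⟩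
  have hΓ0 : 0 ≤ Γ := hΓdef ▸ gm_nonneg _
  have gm_le : ∀ A : Set (En n), gaussianMeasure n A ≤ Γ := fun A =>
    hΓdef ▸ gm_mono (subset_univ A)
  obtain ⟨cup, hcupdef⟩ : ∃ x : ℝ, x = κ * ∫ x : En n, Real.exp (-‖x‖ ^ 2 / 4) := ⟨_, rfl⟩
  have hcup0 : 0 ≤ cup := hcupdef ▸
    mul_nonneg hκ0.le (integral_nonneg fun x => (Real.exp_pos _).le)
  have gm_tail : ∀ d : ℝ, 0 ≤ d → ∀ A : Set (En n), MeasurableSet A → (∀ x ∈ A, d ≤ ‖x‖) →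
      gaussianMeasure n A ≤ cup * Real.exp (-(d ^ 2) / 4) := by
    intro d hd A hA hsub
    rw [gm_def]
    have h4int : Integrable (fun x : En n => Real.exp (-‖x‖ ^ 2 / 4)) :=
      integrable_gaussian n 4 (by norm_num)
    have h1 : ∫ x in A, Real.exp (-‖x‖ ^ 2 / 2)
        ≤ ∫ x in A, Real.exp (-(d ^ 2) / 4) * Real.exp (-‖x‖ ^ 2 / 4) := by
      refine setIntegral_mono_on hφint.integrableOn
        ((h4int.const_mul _).integrableOn) hA fun x hx => ?_
      rw [← Real.exp_add]
      apply Real.exp_le_exp.mpr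
      have := hsub x hx
      nlinarith [norm_nonneg x]
    have h2 : ∫ x in A, Real.exp (-(d ^ 2) / 4) * Real.exp (-‖x‖ ^ 2 / 4)
        = Real.exp (-(d ^ 2) / 4) * ∫ x in A, Real.exp (-‖x‖ ^ 2 / 4) :=
      integral_const_mul _ _
    have h3 : ∫ x in A, Real.exp (-‖x‖ ^ 2 / 4) ≤ ∫ x : En n, Real.exp (-‖x‖ ^ 2 / 4) :=
      setIntegral_le_integral h4int (Eventually.of_forall fun x => (Real.exp_pos _).le)
    have h5 : 0 ≤ ∫ x : En n, Real.exp (-‖x‖ ^ 2 / 4) :=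
      integral_nonneg fun x => (Real.exp_pos _).le
    calc κ * ∫ x in A, Real.exp (-‖x‖ ^ 2 / 2)
        ≤ κ * (Real.exp (-(d ^ 2) / 4) * ∫ x in A, Real.exp (-‖x‖ ^ 2 / 4)) := by
          rw [← h2]; exact mul_le_mul_of_nonneg_left h1 hκ0.le
      _ ≤ κ * (Real.exp (-(d ^ 2) / 4) * ∫ x : En n, Real.exp (-‖x‖ ^ 2 / 4)) := by
          refine mul_le_mul_of_nonneg_left ?_ hκ0.le
          exact mul_le_mul_of_nonneg_left h3 (Real.exp_pos _).le
      _ = cup * Real.exp (-(d ^ 2) / 4) := by rw [hcupdef]; ring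
  -- measure of ω
  obtain ⟨μR, hμRdef⟩ : ∃ x : ℝ, x = (μ ω).toReal := ⟨_, rfl⟩
  have hμR0 : 0 < μR := hμRdef ▸ ENNReal.toReal_pos hμ (measure_ne_top μ ω)
  have int_const : ∀ c : ℝ, ∫ _ in ω, c ∂μ = c * μR := by
    intro c
    rw [setIntegral_const, smul_eq_mul, mul_comm, hμRdef]
    rfl
  -- integral helpers
  have hIntOn : ∀ g : En n → ℝ, ContinuousOn g ω → IntegrableOn (fun u => g u ^ p) ω μ :=
    fun g hg => ContinuousOn.integrableOn_compact hωc
      (hg.rpow_const fun x _ => Or.inr hp.le)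
  have int_mono : ∀ g1 g2 : En n → ℝ, ContinuousOn g1 ω → ContinuousOn g2 ω →
      (∀ u ∈ ω, 0 ≤ g1 u) → (∀ u ∈ ω, g1 u ≤ g2 u) →
      ∫ u in ω, g1 u ^ p ∂μ ≤ ∫ u in ω, g2 u ^ p ∂μ := by
    intro g1 g2 h1 h2 h3 h4
    exact setIntegral_mono_on (hIntOn g1 h1) (hIntOn g2 h2) hωmeas fun u hu =>
      Real.rpow_le_rpow (h3 u hu) (h4 u hu) hp.le
  -- baseline
  obtain ⟨x₁, hx₁ball, hx₁ip⟩ := hdeep 1 1 one_pos zero_le_one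
  have hW1ball : closedBall x₁ 1 ⊆ wulffShape C ω (fun _ => 1) := fun y hy =>
    mem_wulffShape.mpr ⟨hx₁ball hy, fun u hu => hx₁ip u hu y hy⟩
  have hgmW1 : 0 < gaussianMeasure n (wulffShape C ω (fun _ => (1:ℝ))) := by
    rw [gm_def]
    apply mul_pos hκ0
    have h1 : 0 < ∫ x in closedBall x₁ 1, Real.exp (-‖x‖ ^ 2 / 2) := by
      rw [setIntegral_pos_iff_support_of_nonneg_ae
        (Eventually.of_forall fun x => (Real.exp_pos _).le) hφint.integrableOn]
      have hsupp : Function.support (fun x : En n => Real.exp (-‖x‖ ^ 2 / 2)) = univ := by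
        ext x; simp [Function.mem_support, (Real.exp_pos _).ne']
      rw [hsupp, univ_inter]
      exact measure_closedBall_pos volume x₁ one_pos
    have h2 : ∫ x in closedBall x₁ 1, Real.exp (-‖x‖ ^ 2 / 2)
        ≤ ∫ x in wulffShape C ω (fun _ => (1:ℝ)), Real.exp (-‖x‖ ^ 2 / 2) :=
      setIntegral_mono_set hφint.integrableOn
        (Eventually.of_forall fun x => (Real.exp_pos _).le)
        (HasSubset.Subset.eventuallyLE hW1ball)
    linarith
  obtain ⟨Φ₀, hΦ₀def⟩ : ∃ x : ℝ,
      x = gaussianMeasure n (wulffShape C ω (fun _ => 1)) * μR := ⟨_, rfl⟩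
  have hΦ₀ : 0 < Φ₀ := hΦ₀def ▸ mul_pos hgmW1 hμR0
  -- choice of a
  obtain ⟨τ, hτdef⟩ : ∃ x : ℝ, x = min 1 (Φ₀ / (Γ * μR + 1)) := ⟨_, rfl⟩
  have hτ0 : 0 < τ := hτdef ▸ lt_min one_pos (by positivity)
  obtain ⟨a, hadef⟩ : ∃ x : ℝ, x = τ ^ (1 / p) := ⟨_, rfl⟩
  have ha0 : 0 < a := hadef ▸ Real.rpow_pos_of_pos hτ0 _
  have ha1 : a ≤ 1 := hadef ▸
    Real.rpow_le_one hτ0.le (le_of_eq_of_le hτdef (min_le_left _ _)) (by positivity)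
  have hap : a ^ p = τ := by
    rw [hadef, ← Real.rpow_mul hτ0.le, one_div_mul_cancel hp.ne', Real.rpow_one]
  have hcase_a : Γ * (a ^ p * μR) < Φ₀ := by
    rw [hap]
    have h1 : τ ≤ Φ₀ / (Γ * μR + 1) := le_of_eq_of_le hτdef (min_le_right _ _)
    have h2 : Γ * (τ * μR) ≤ (Γ * μR) * (Φ₀ / (Γ * μR + 1)) := by
      have := mul_le_mul_of_nonneg_left h1 (by positivity : (0:ℝ) ≤ Γ * μR)
      nlinarith
    have h3 : (Γ * μR) * (Φ₀ / (Γ * μR + 1)) < Φ₀ := by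
      have h5 : (Γ * μR) * (Φ₀ / (Γ * μR + 1)) = Φ₀ * ((Γ * μR) / (Γ * μR + 1)) := by
        ring
      have h6 : (Γ * μR) / (Γ * μR + 1) < 1 :=
        (div_lt_one (by positivity)).mpr (by linarith)
      nlinarith
    linarith
  -- choice of b
  obtain ⟨b, hb1, hbprop⟩ : ∃ b : ℝ, 1 ≤ b ∧
      ∀ d : ℝ, b ≤ d → cup * Real.exp (-(d ^ 2) / 4) * (d ^ p * μR) < Φ₀ := by
    refine ⟨max (max 1 (4 * (p + 1))) (Real.log ((cup * μR + 1) / Φ₀) + 1),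
      le_trans (le_max_left 1 _) (le_max_left _ _), fun d hd => ?_⟩
    have hd1 : 1 ≤ d := le_trans (le_trans (le_max_left 1 _) (le_max_left _ _)) hd
    have hd4 : 4 * (p + 1) ≤ d := le_trans (le_trans (le_max_right _ _) (le_max_left _ _)) hd
    have hdlog : Real.log ((cup * μR + 1) / Φ₀) + 1 ≤ d := le_trans (le_max_right _ _) hd
    have hd0 : (0:ℝ) < d := by linarith
    have h1 : d ^ p ≤ Real.exp (p * d) := by
      rw [Real.rpow_def_of_pos hd0]
      apply Real.exp_le_exp.mpr
      have := Real.log_le_sub_one_of_pos hd0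
      nlinarith
    have h2 : Real.exp (-(d ^ 2) / 4) * d ^ p ≤ Real.exp (-d) := by
      calc Real.exp (-(d ^ 2) / 4) * d ^ p
          ≤ Real.exp (-(d ^ 2) / 4) * Real.exp (p * d) :=
            mul_le_mul_of_nonneg_left h1 (Real.exp_pos _).le
        _ = Real.exp (p * d - d ^ 2 / 4) := by rw [← Real.exp_add]; ring_nf
        _ ≤ Real.exp (-d) := Real.exp_le_exp.mpr (by nlinarith)
    have h8 : (0:ℝ) < cup * μR + 1 := by positivity
    have h3 : Real.exp (-d) < Φ₀ / (cup * μR + 1) := by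
      have h4 : Real.log ((cup * μR + 1) / Φ₀) < d := by linarith
      have h5 : (cup * μR + 1) / Φ₀ < Real.exp d := by
        calc (cup * μR + 1) / Φ₀ = Real.exp (Real.log ((cup * μR + 1) / Φ₀)) :=
              (Real.exp_log (by positivity)).symm
          _ < Real.exp d := Real.exp_lt_exp.mpr h4
      have h7 : cup * μR + 1 < Φ₀ * Real.exp d := by
        have h6 := (div_lt_iff₀ hΦ₀).mp h5
        linarith [mul_comm (Real.exp d) Φ₀]
      rw [Real.exp_neg, lt_div_iff₀ h8, inv_mul_eq_div, div_lt_iff₀ (Real.exp_pos d)]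
      exact h7
    have hdp0 : (0:ℝ) ≤ d ^ p := Real.rpow_nonneg hd0.le p
    have h9 : cup * Real.exp (-(d ^ 2) / 4) * (d ^ p * μR)
        = (cup * μR) * (Real.exp (-(d ^ 2) / 4) * d ^ p) := by ring
    rw [h9]
    calc (cup * μR) * (Real.exp (-(d ^ 2) / 4) * d ^ p)
        ≤ (cup * μR) * Real.exp (-d) :=
          mul_le_mul_of_nonneg_left h2 (by positivity)
      _ ≤ (cup * μR + 1) * Real.exp (-d) := by nlinarith [Real.exp_pos (-d)]
      _ < Φ₀ := by
          have := (lt_div_iff₀ h8).mp h3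
          nlinarith [Real.exp_pos (-d)]
  -- the compact family A of admissible support-like functions
  haveI hcomp : CompactSpace ↥ω := isCompact_iff_compactSpace.mp hωc
  obtain ⟨m, hmdef⟩ : ∃ x : ℝ, x = ρ * a := ⟨_, rfl⟩
  have hm0 : 0 < m := hmdef ▸ mul_pos hρ0 ha0
  have hm1 : m ≤ 1 := by rw [hmdef]; nlinarith
  obtain ⟨L, hLdef⟩ : ∃ x : NNReal, x = (b / ρ).toNNReal := ⟨_, rfl⟩
  set A : Set (↥ω →ᵇ ℝ) := {g | LipschitzWith L g ∧ ∀ x : ↥ω, g x ∈ Icc m b} with hAdef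
  have hA_closed : IsClosed A := by
    have h1 : A = (⋂ (x : ↥ω) (y : ↥ω),
        {g : ↥ω →ᵇ ℝ | dist (g x) (g y) ≤ (L : ℝ) * dist x y}) ∩
        (⋂ x : ↥ω, {g : ↥ω →ᵇ ℝ | g x ∈ Icc m b}) := by
      ext g
      simp only [hAdef, mem_setOf_eq, mem_inter_iff, mem_iInter,
        lipschitzWith_iff_dist_le_mul]
    rw [h1]
    refine IsClosed.inter (isClosed_iInter fun x => isClosed_iInter fun y => ?_)
      (isClosed_iInter fun x => ?_)
    · exact isClosed_le (Continuous.dist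
        (continuous_eval_const x)
        (continuous_eval_const y)) continuous_const
    · exact IsClosed.preimage
        (continuous_eval_const x) isClosed_Icc
  have hA_compact : IsCompact A := by
    refine BoundedContinuousFunction.arzela_ascoli₂ (Icc m b) isCompact_Icc A hA_closed
      (fun g x hg => hg.2 x) ?_
    apply Metric.equicontinuous_of_continuity_modulus (fun t => (L : ℝ) * t)
    · simpa using (continuous_mul_left (L : ℝ)).tendsto (0:ℝ)
    · exact fun x y i => i.2.1.dist_le_mul x y
  -- extension operator
  obtain ⟨FF, hFFdef⟩ : ∃ F : (↥ω →ᵇ ℝ) → En n → ℝ,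
      F = fun g x => if h : x ∈ ω then g ⟨x, h⟩ else 1 := ⟨_, rfl⟩
  have hFF_eq : ∀ (g : ↥ω →ᵇ ℝ) (u : En n) (hu : u ∈ ω), FF g u = g ⟨u, hu⟩ :=
    fun g u hu => by rw [hFFdef]; exact dif_pos hu
  have hFF_cont : ∀ g : ↥ω →ᵇ ℝ, ContinuousOn (FF g) ω := by
    intro g
    rw [continuousOn_iff_continuous_restrict]
    have h : ω.restrict (FF g) = fun u : ↥ω => g u := funext fun u => hFF_eq g u u.2
    rw [show ω.domRestrict (FF g) = ω.restrict (FF g) from rfl, h]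
    exact g.continuous
  have hFF_mem : ∀ g ∈ A, ∀ u, ∀ hu : u ∈ ω, FF g u ∈ Icc m b := fun g hg u hu => by
    rw [hFF_eq g u hu]; exact hg.2 _
  -- the functional
  obtain ⟨Φ, hΦdef⟩ : ∃ F : (↥ω →ᵇ ℝ) → ℝ, F = fun g =>
      gaussianMeasure n (wulffShape C ω (FF g)) * ∫ u in ω, (FF g u) ^ p ∂μ := ⟨_, rfl⟩
  have hΦeq : ∀ g, Φ g
      = gaussianMeasure n (wulffShape C ω (FF g)) * ∫ u in ω, (FF g u) ^ p ∂μ :=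
    fun g => by rw [hΦdef]
  -- nonemptiness of Wulff shapes
  have hWne : ∀ f : En n → ℝ, (∃ T, 0 < T ∧ ∀ u ∈ ω, f u ≤ T) →
      (wulffShape C ω f).Nonempty := by
    rintro f ⟨T, hT0, hT⟩
    obtain ⟨x, hxball, hxip⟩ := hdeep T 0 hT0 le_rfl
    refine ⟨x, mem_wulffShape.mpr ⟨hxball (mem_closedBall_self le_rfl), fun u hu => ?_⟩⟩
    have := hxip u hu x (mem_closedBall_self le_rfl)
    linarith [hT u hu]
  -- A is nonempty: the constant function 1
  have hAne : (BoundedContinuousFunction.const ↥ω (1:ℝ)) ∈ A := by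
    constructor
    · exact (LipschitzWith.const (1:ℝ)).weaken (zero_le : (0:NNReal) ≤ L)
    · intro x
      simp only [BoundedContinuousFunction.const_apply]
      exact ⟨hm1, hb1⟩
  have int_nonneg : ∀ g ∈ A, 0 ≤ ∫ u in ω, (FF g u) ^ p ∂μ := fun g hg =>
    setIntegral_nonneg hωmeas fun u hu =>
      Real.rpow_nonneg (le_trans hm0.le (hFF_mem g hg u hu).1) p
  have hbddS : BddAbove (Φ '' A) := by
    refine ⟨Γ * (b ^ p * μR), ?_⟩
    rintro _ ⟨g, hg, rfl⟩
    rw [hΦeq]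
    refine mul_le_mul (gm_le _) ?_ (int_nonneg g hg) hΓ0
    calc ∫ u in ω, (FF g u) ^ p ∂μ ≤ ∫ u in ω, ((fun _ => b) u) ^ p ∂μ :=
          int_mono _ _ (hFF_cont g) continuousOn_const
            (fun u hu => le_trans hm0.le (hFF_mem g hg u hu).1)
            (fun u hu => (hFF_mem g hg u hu).2)
      _ = b ^ p * μR := int_const _
  have hSne : (Φ '' A).Nonempty := ⟨_, mem_image_of_mem Φ hAne⟩
  obtain ⟨S, hSdef⟩ : ∃ x : ℝ, x = sSup (Φ '' A) := ⟨_, rfl⟩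
  -- Φ of the constant 1 equals Φ₀
  have hconst1 : Φ (BoundedContinuousFunction.const ↥ω (1:ℝ)) = Φ₀ := by
    rw [hΦeq]
    have h1 : wulffShape C ω (FF (BoundedContinuousFunction.const ↥ω (1:ℝ)))
        = wulffShape C ω (fun _ => 1) :=
      wulffShape_congr fun u hu => by
        rw [hFF_eq _ u hu, BoundedContinuousFunction.const_apply]
    have h2 : ∫ u in ω, (FF (BoundedContinuousFunction.const ↥ω (1:ℝ)) u) ^ p ∂μ = μR := by
      have h3 : ∫ u in ω, (FF (BoundedContinuousFunction.const ↥ω (1:ℝ)) u) ^ p ∂μ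
          = ∫ _ in ω, (1:ℝ) ∂μ := by
        refine setIntegral_congr_fun hωmeas fun u hu => ?_
        rw [hFF_eq _ u hu, BoundedContinuousFunction.const_apply, Real.one_rpow]
      rw [h3, int_const, one_mul]
    rw [h1, h2, hΦ₀def]
  have hΦ₀S : Φ₀ ≤ S := by
    rw [hSdef, ← hconst1]
    exact le_csSup hbddS (mem_image_of_mem Φ hAne)
  -- maximizing sequence and convergent subsequence
  obtain ⟨ys, _, hys_tendsto, hys_mem⟩ := exists_seq_tendsto_sSup hSne hbddS
  choose gs hgsA hgsΦ using hys_mem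
  obtain ⟨gstar, hgstarA, ψ, hψmono, hψtendsto⟩ := hA_compact.tendsto_subseq hgsA
  have hΦtendsto : Tendsto (fun j => Φ (gs (ψ j))) atTop (𝓝 S) := by
    have h : (fun j => Φ (gs (ψ j))) = fun j => ys (ψ j) := funext fun j => hgsΦ _
    rw [h, hSdef]
    exact hys_tendsto.comp hψmono.tendsto_atTop
  -- upper semicontinuity: S ≤ Φ gstar
  have husc : S ≤ Φ gstar := by
    obtain ⟨δ, hδdef⟩ : ∃ δ : ℕ → ℝ, δ = fun k : ℕ => 1 / ((k : ℝ) + 1) := ⟨_, rfl⟩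
    have hδ0 : ∀ k, 0 < δ k := fun k => by rw [hδdef]; positivity
    have hδ1 : ∀ k, δ k ≤ 1 := fun k => by
      rw [hδdef]
      refine div_le_one_of_le₀ ?_ (by positivity)
      have := Nat.cast_nonneg (α := ℝ) k
      linarith
    have hδanti : ∀ j k : ℕ, j ≤ k → δ k ≤ δ j := by
      intro j k hjk
      rw [hδdef]
      have hc : ((j:ℝ) + 1) ≤ (k:ℝ) + 1 := by
        have : (j:ℝ) ≤ (k:ℝ) := Nat.cast_le.mpr hjk
        linarith
      exact one_div_le_one_div_of_le (by positivity) hc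
    have hδto : ∀ ε : ℝ, 0 < ε → ∃ k, δ k < ε := fun ε hε => by
      obtain ⟨k, hk⟩ := exists_nat_one_div_lt hε
      exact ⟨k, by rw [hδdef]; exact_mod_cast hk⟩
    obtain ⟨B, hBdef⟩ : ∃ B : ℕ → ℝ, B = fun k =>
        gaussianMeasure n (wulffShape C ω (fun x => FF gstar x - δ k)) *
          ∫ u in ω, (FF gstar u + δ k) ^ p ∂μ := ⟨_, rfl⟩
    have hSB : ∀ k, S ≤ B k := by
      intro k
      refine le_of_tendsto hΦtendsto ?_
      filter_upwards [hψtendsto (Metric.ball_mem_nhds gstar (hδ0 k))] with j hj0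
      have hj : dist (gs (ψ j)) gstar < δ k := by
        simpa [Function.comp, Metric.mem_ball] using hj0
      have hpt : ∀ u ∈ ω, |FF (gs (ψ j)) u - FF gstar u| ≤ δ k := by
        intro u hu
        rw [hFF_eq _ u hu, hFF_eq _ u hu, ← Real.dist_eq]
        exact le_of_lt (lt_of_le_of_lt
          (BoundedContinuousFunction.dist_coe_le_dist (⟨u, hu⟩ : ↥ω)) hj)
      rw [hΦeq, hBdef]
      have hsub : wulffShape C ω (FF (gs (ψ j)))
          ⊆ wulffShape C ω (fun x => FF gstar x - δ k) := by
        apply wulffShape_anti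
        intro u hu
        have := abs_le.mp (hpt u hu)
        linarith [this.1]
      have h2 : ∫ u in ω, (FF (gs (ψ j)) u) ^ p ∂μ
          ≤ ∫ u in ω, (FF gstar u + δ k) ^ p ∂μ := by
        refine int_mono _ _ (hFF_cont _) ((hFF_cont gstar).add continuousOn_const)
          (fun u hu => le_trans hm0.le (hFF_mem _ (hgsA (ψ j)) u hu).1) fun u hu => ?_
        have := abs_le.mp (hpt u hu)
        linarith [this.2]
      exact mul_le_mul (gm_mono hsub) h2 (int_nonneg _ (hgsA (ψ j))) (gm_nonneg _)
    have hBtendsto : Tendsto B atTop (𝓝 (Φ gstar)) := by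
      rw [hBdef, hΦeq]
      refine Tendsto.mul ?_ ?_
      · -- Gaussian measures converge (continuity from above)
        have hanti : Antitone fun k => wulffShape C ω (fun x => FF gstar x - δ k) := by
          intro j k hjk
          apply wulffShape_anti
          intro u hu
          have := hδanti j k hjk
          linarith
        have hmeas : ∀ k : ℕ,
            MeasurableSet (wulffShape C ω (fun x => FF gstar x - δ k)) :=
          fun k => (isClosed_wulffShape hCc).measurableSet
        have hInter : ⋂ k, wulffShape C ω (fun x => FF gstar x - δ k)
            = wulffShape C ω (FF gstar) := by
          ext y
          simp only [mem_iInter, mem_wulffShape]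
          constructor
          · intro h
            refine ⟨(h 0).1, fun u hu => ?_⟩
            refine le_of_forall_pos_le_add fun ε hε => ?_
            obtain ⟨k, hk⟩ := hδto ε hε
            have := (h k).2 u hu
            linarith
          · intro h k
            refine ⟨h.1, fun u hu => ?_⟩
            have := h.2 u hu
            have := hδ0 k
            linarith
        have htend := tendsto_setIntegral_of_antitone (f := fun x : En n =>
            Real.exp (-‖x‖ ^ 2 / 2)) hmeas hanti ⟨0, hφint.integrableOn⟩
        rw [hInter] at htend
        have := htend.const_mul κ
        simpa only [← gm_def] using this
      · -- integrals converge (dominated convergence)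
        refine tendsto_integral_of_dominated_convergence (bound := fun _ => (b + 1) ^ p)
          ?_ ?_ ?_ ?_
        · intro k
          exact (((hFF_cont gstar).add continuousOn_const).rpow_const
            fun x _ => Or.inr hp.le).aestronglyMeasurable hωmeas
        · exact integrableOn_const (measure_ne_top μ ω)
        · intro k
          filter_upwards [ae_restrict_mem hωmeas] with u hu
          have h1 := hFF_mem gstar hgstarA u hu
          have h2 : (0:ℝ) ≤ FF gstar u + δ k := by
            have := (hδ0 k); linarith [le_trans hm0.le h1.1]
          rw [Real.norm_eq_abs, abs_of_nonneg (Real.rpow_nonneg h2 p)]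
          exact Real.rpow_le_rpow h2 (by linarith [h1.2, hδ1 k]) hp.le
        · filter_upwards [ae_restrict_mem hωmeas] with u hu
          have hδt : Tendsto δ atTop (𝓝 0) := by
            rw [hδdef]; exact tendsto_one_div_add_atTop_nhds_zero_nat
          have hbase : Tendsto (fun k => FF gstar u + δ k) atTop (𝓝 (FF gstar u)) := by
            simpa using tendsto_const_nhds.add hδt
          have hpos : FF gstar u ≠ 0 :=
            ne_of_gt (lt_of_lt_of_le hm0 (hFF_mem gstar hgstarA u hu).1)
          exact ((Real.continuousAt_rpow_const _ _ (Or.inl hpos)).tendsto).comp hbase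
    exact ge_of_tendsto hBtendsto (Eventually.of_forall hSB)
  -- distance data for Wulff shapes
  have hKdata : ∀ f : En n → ℝ, (wulffShape C ω f).Nonempty → ∃ d x₀, 0 ≤ d ∧
      x₀ ∈ wulffShape C ω f ∧ ‖x₀‖ = d ∧ ∀ x ∈ wulffShape C ω f, d ≤ ‖x‖ := by
    intro f hne
    obtain ⟨x₀, hx₀, hdist⟩ := (isClosed_wulffShape hCc).exists_infDist_eq_dist hne 0
    refine ⟨infDist 0 (wulffShape C ω f), x₀, infDist_nonneg, hx₀, ?_, ?_⟩
    · rw [hdist, dist_zero_left]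
    · intro x hx
      calc infDist 0 (wulffShape C ω f) ≤ dist 0 x := infDist_le_dist_of_mem hx
        _ = ‖x‖ := by rw [dist_zero_left]
  -- the maximizing pseudo-cone K
  have hgstarb : ∀ u, ∀ hu : u ∈ ω, m ≤ FF gstar u ∧ FF gstar u ≤ b :=
    fun u hu => ⟨(hFF_mem gstar hgstarA u hu).1, (hFF_mem gstar hgstarA u hu).2⟩
  have hKne : (wulffShape C ω (FF gstar)).Nonempty :=
    hWne _ ⟨b, by linarith, fun u hu => (hgstarb u hu).2⟩
  have hKC : wulffShape C ω (FF gstar) ⊆ C := fun y hy => (mem_wulffShape.mp hy).1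
  have hKclass : InKClass C ω (wulffShape C ω (FF gstar)) := by
    refine ⟨⟨⟨hKne, isClosed_wulffShape hCc, convex_wulffShape hCconv, ?_, ?_⟩,
      recessionCone_wulffShape hCc hCconv hCcone hρ0 hsep hKne⟩, ?_⟩
    · -- 0 ∉ K
      obtain ⟨u₀, hu₀⟩ := hω
      intro h0
      have h1 := (mem_wulffShape.mp h0).2 u₀ hu₀
      rw [inner_zero_left] at h1
      have h2 := (hgstarb u₀ hu₀).1
      linarith
    · -- dilation invariance
      intro c hc y hy
      obtain ⟨x, hx, rfl⟩ := hy
      refine mem_wulffShape.mpr ⟨hCcone _ (mem_wulffShape.mp hx).1 c (by linarith),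
        fun u hu => ?_⟩
      rw [real_inner_smul_left]
      have h1 := (mem_wulffShape.mp hx).2 u hu
      have h2 : -(FF gstar u) ≤ 0 := by linarith [le_trans hm0.le (hgstarb u hu).1]
      nlinarith
    · exact wulff_determined hρ0.le hsep hKne
  refine ⟨wulffShape C ω (FF gstar), hKclass, ?_⟩
  -- right-hand side dominates Φ gstar
  obtain ⟨dK, xK, hdK0, hxK, hxKn, hdKle⟩ := hKdata (FF gstar) hKne
  have hsuppbK : ∀ u ∈ ω, ρ * dK ≤ -suppFn (wulffShape C ω (FF gstar)) u ∧
      -suppFn (wulffShape C ω (FF gstar)) u ≤ dK :=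
    fun u hu => suppFn_bounds hρ0.le hsep hKC hunit hKne hdKle hxK hxKn hu
  have hsupp_contK : ContinuousOn (fun u => -suppFn (wulffShape C ω (FF gstar)) u) ω :=
    (suppFn_lipschitzOnWith hρ0 hdK0 hsep hKC hunit hKne hdKle hxK hxKn).continuousOn
  have hsupp_geK : ∀ u ∈ ω, FF gstar u ≤ -suppFn (wulffShape C ω (FF gstar)) u := by
    intro u hu
    have := suppFn_wulff_le (f := FF gstar) hKne hu
    linarith
  have hRHS : Φ gstar ≤ gaussianMeasure n (wulffShape C ω (FF gstar)) *
      ∫ u in ω, (-suppFn (wulffShape C ω (FF gstar)) u) ^ p ∂μ := by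
    rw [hΦeq]
    refine mul_le_mul_of_nonneg_left ?_ (gm_nonneg _)
    exact int_mono _ _ (hFF_cont gstar) hsupp_contK
      (fun u hu => le_trans hm0.le (hgstarb u hu).1) hsupp_geK
  -- the main estimate for an arbitrary admissible f
  intro f hf_cont hf_pos
  obtain ⟨uM, huM, huMmax⟩ := hωc.exists_isMaxOn hω hf_cont
  have hKfne : (wulffShape C ω f).Nonempty :=
    hWne f ⟨max (f uM) 1, lt_max_of_lt_right one_pos,
      fun u hu => le_trans (huMmax hu) (le_max_left _ _)⟩
  have hKfC : wulffShape C ω f ⊆ C := fun y hy => (mem_wulffShape.mp hy).1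
  obtain ⟨d, x₀, hd0, hx₀, hx₀n, hdle⟩ := hKdata f hKfne
  obtain ⟨u₁, hu₁⟩ := hω
  have hd_pos : 0 < d := by
    have h1 := (mem_wulffShape.mp hx₀).2 u₁ hu₁
    have h2 : -(‖x₀‖ * ‖u₁‖) ≤ ⟪x₀, u₁⟫ := neg_le_of_abs_le (abs_real_inner_le_norm _ _)
    rw [hunit u₁ hu₁, mul_one, hx₀n] at h2
    have h3 := hf_pos u₁ hu₁
    linarith
  have hfb : ∀ u ∈ ω, ρ * d ≤ -suppFn (wulffShape C ω f) u ∧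
      -suppFn (wulffShape C ω f) u ≤ d :=
    fun u hu => suppFn_bounds hρ0.le hsep hKfC hunit hKfne hdle hx₀ hx₀n hu
  have hf_cont2 : ContinuousOn (fun u => -suppFn (wulffShape C ω f) u) ω :=
    (suppFn_lipschitzOnWith hρ0 hd0 hsep hKfC hunit hKfne hdle hx₀ hx₀n).continuousOn
  have hf_le : ∀ u ∈ ω, f u ≤ -suppFn (wulffShape C ω f) u := by
    intro u hu
    have := suppFn_wulff_le hKfne hu
    linarith
  have hstep1 : gaussianMeasure n (wulffShape C ω f) * ∫ u in ω, f u ^ p ∂μ ≤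
      gaussianMeasure n (wulffShape C ω f) *
        ∫ u in ω, (-suppFn (wulffShape C ω f) u) ^ p ∂μ :=
    mul_le_mul_of_nonneg_left
      (int_mono _ _ hf_cont hf_cont2 (fun u hu => (hf_pos u hu).le) hf_le) (gm_nonneg _)
  have hint_d : ∫ u in ω, (-suppFn (wulffShape C ω f) u) ^ p ∂μ ≤ d ^ p * μR := by
    calc ∫ u in ω, (-suppFn (wulffShape C ω f) u) ^ p ∂μ
        ≤ ∫ u in ω, ((fun _ => d) u) ^ p ∂μ :=
          int_mono _ _ hf_cont2 continuousOn_const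
            (fun u hu => le_trans (by positivity) (hfb u hu).1)
            (fun u hu => (hfb u hu).2)
      _ = d ^ p * μR := int_const _
  have hint_nonneg2 : 0 ≤ ∫ u in ω, (-suppFn (wulffShape C ω f) u) ^ p ∂μ :=
    setIntegral_nonneg hωmeas fun u hu =>
      Real.rpow_nonneg (le_trans (by positivity) (hfb u hu).1) p
  have hmain : gaussianMeasure n (wulffShape C ω f) *
      ∫ u in ω, (-suppFn (wulffShape C ω f) u) ^ p ∂μ ≤ S := by
    rcases lt_or_ge d a with hda | hda
    · -- d small
      have h1 : gaussianMeasure n (wulffShape C ω f) *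
          ∫ u in ω, (-suppFn (wulffShape C ω f) u) ^ p ∂μ ≤ Γ * (d ^ p * μR) :=
        mul_le_mul (gm_le _) hint_d hint_nonneg2 hΓ0
      have h2 : Γ * (d ^ p * μR) ≤ Γ * (a ^ p * μR) := by
        refine mul_le_mul_of_nonneg_left ?_ hΓ0
        exact mul_le_mul_of_nonneg_right
          (Real.rpow_le_rpow hd0 hda.le hp.le) hμR0.le
      linarith
    rcases le_or_gt b d with hdb | hdb
    · -- d large
      have h1 : gaussianMeasure n (wulffShape C ω f) ≤ cup * Real.exp (-(d ^ 2) / 4) :=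
        gm_tail d hd0 _ (isClosed_wulffShape hCc).measurableSet hdle
      have h2 : gaussianMeasure n (wulffShape C ω f) *
          ∫ u in ω, (-suppFn (wulffShape C ω f) u) ^ p ∂μ
          ≤ cup * Real.exp (-(d ^ 2) / 4) * (d ^ p * μR) :=
        mul_le_mul h1 hint_d hint_nonneg2 (by positivity)
      linarith [hbprop d hdb]
    · -- middle range : -h_{K_f} belongs to the compact family A
      have hlip := suppFn_lipschitzOnWith hρ0 hd0 hsep hKfC hunit hKfne hdle hx₀ hx₀n
      have hlip2 : LipschitzWith (d / ρ).toNNReal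
          (ω.restrict fun u => -suppFn (wulffShape C ω f) u) :=
        lipschitzOnWith_iff_restrict.mp hlip
      obtain ⟨gf, hgfdef⟩ : ∃ g : ↥ω →ᵇ ℝ, g = BoundedContinuousFunction.mkOfCompact
          ⟨ω.restrict fun u => -suppFn (wulffShape C ω f) u, hlip2.continuous⟩ := ⟨_, rfl⟩
      have hgf_apply : ∀ u : ↥ω, gf u = -suppFn (wulffShape C ω f) u :=
        fun u => by rw [hgfdef]; rfl
      have hgfA : gf ∈ A := by
        constructor
        · have h1 : LipschitzWith (d / ρ).toNNReal gf := by
            rw [hgfdef]; exact hlip2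
          refine h1.weaken ?_
          rw [hLdef]
          exact Real.toNNReal_le_toNNReal (by gcongr)
        · intro u
          rw [hgf_apply]
          constructor
          · rw [hmdef]
            calc ρ * a ≤ ρ * d := mul_le_mul_of_nonneg_left hda hρ0.le
              _ ≤ -suppFn (wulffShape C ω f) ↑u := (hfb u u.2).1
          · exact le_trans (hfb u u.2).2 hdb.le
      have hΦgf : Φ gf = gaussianMeasure n (wulffShape C ω f) *
          ∫ u in ω, (-suppFn (wulffShape C ω f) u) ^ p ∂μ := by
        rw [hΦeq]
        have h1 : wulffShape C ω (FF gf) = wulffShape C ω f := by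
          rw [show wulffShape C ω (FF gf)
              = wulffShape C ω (fun x => -suppFn (wulffShape C ω f) x) from
            wulffShape_congr fun u hu => by rw [hFF_eq _ u hu, hgf_apply]]
          exact wulff_neg_suppFn hρ0.le hsep hKfne
        have h2 : ∫ u in ω, (FF gf u) ^ p ∂μ
            = ∫ u in ω, (-suppFn (wulffShape C ω f) u) ^ p ∂μ :=
          setIntegral_congr_fun hωmeas fun u hu => by rw [hFF_eq _ u hu, hgf_apply]
        rw [h1, h2]
      rw [← hΦgf, hSdef]
      exact le_csSup hbddS (mem_image_of_mem Φ hgfA)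
  calc gaussianMeasure n (wulffShape C ω f) * ∫ u in ω, f u ^ p ∂μ
      ≤ gaussianMeasure n (wulffShape C ω f) *
        ∫ u in ω, (-suppFn (wulffShape C ω f) u) ^ p ∂μ := hstep1
    _ ≤ S := hmain
    _ ≤ Φ gstar := husc
    _ ≤ _ := hRHS
end

section
/- Let C ⊆ ℝⁿ be a pointed n-dimensional closed convex cone, p > 0, and μ a nonzero finite Borel measure on Ω = S^{n-1} ∩ int C°. Let (ω_i)_{i∈ℕ} be nonempty compact subsets of Ω with ω_i contained in the interior of ω_{i+1} relative to S^{n-1}, ⋃_i ω_i = Ω, and μ restricted to ω_0 nonzero. For each i, let K_i ∈ 𝒦(C,ω_i) be such that γⁿ(K_i) ∫_{ω_i} (−h_{K_i})^p dμ ≥ γⁿ([f]) ∫_{ω_i} f^p dμ for every continuous f : ω_i → (0,∞) (i.e. K_i maximizes I_{μ⌞ω_i}). Then there exist constants 0 < m < M such that m < dist(0, K_i) < M for all i ∈ ℕ. -/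
open MeasureTheory Metric Set Filter
open scoped RealInnerProductSpace Pointwise Topology ENNReal

lemma integrable_gauss (n : ℕ) {b : ℝ} (hb : 0 < b) :
    Integrable (fun x : En n => Real.exp (-b * ‖x‖ ^ 2)) := by
  have h := (GaussianFourier.integrable_cexp_neg_mul_sq_norm_add (V := En n)
    (b := (b : ℂ)) (by simpa using hb) 0 0).re
  refine h.congr (Filter.Eventually.of_forall fun x => ?_)
  simp [Complex.exp_ofReal_re, ← Complex.ofReal_pow, ← Complex.ofReal_neg,
    ← Complex.ofReal_mul, Complex.exp_ofReal_re]

set_option maxHeartbeats 2000000 in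
/-- Uniform bounds on `dist(0, K_i)` for maximizers `K_i` of `I_{μ⌞ω_i}` (case `p > 0`),
where `(ω_i)` is an increasing exhaustion of `Ω` by nonempty compact sets, each contained in
the interior of the next relative to the sphere. -/
theorem uniform_estimate_p_pos {n : ℕ} (hn : 1 ≤ n) (C : Set (En n)) (hC : IsPointedCone C)
    (p : ℝ) (hp : 0 < p)
    (μ : Measure (En n)) [IsFiniteMeasure μ] (hμsupp : μ (OmegaSet C)ᶜ = 0) (hμ : μ ≠ 0)
    (ω : ℕ → Set (En n)) (hne : ∀ i, (ω i).Nonempty) (hcpt : ∀ i, IsCompact (ω i))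
    (hsub : ∀ i, ω i ⊆ OmegaSet C)
    (hint : ∀ i, ∀ x ∈ ω i, ∃ V : Set (En n),
      IsOpen V ∧ x ∈ V ∧ V ∩ sphere (0 : En n) 1 ⊆ ω (i + 1))
    (hunion : ⋃ i, ω i = OmegaSet C)
    (hμω0 : μ (ω 0) ≠ 0)
    (K : ℕ → Set (En n)) (hK : ∀ i, InKClass C (ω i) (K i))
    (hmax : ∀ i, ∀ f : En n → ℝ, ContinuousOn f (ω i) → (∀ u ∈ ω i, 0 < f u) →
      gaussianMeasure n (wulffShape C (ω i) f) * ∫ u in ω i, f u ^ p ∂μ ≤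
        gaussianMeasure n (K i) * ∫ u in ω i, (-suppFn (K i) u) ^ p ∂μ) :
    ∃ m M : ℝ, 0 < m ∧ m < M ∧
      ∀ i, m < Metric.infDist 0 (K i) ∧ Metric.infDist 0 (K i) < M := by
  classical
  -- notation
  set d : ℕ → ℝ := fun i => Metric.infDist 0 (K i) with hd
  have cn_pos : 0 < (2 * Real.pi) ^ (-(n : ℝ) / 2) :=
    Real.rpow_pos_of_pos (by positivity) _
  set cn : ℝ := (2 * Real.pi) ^ (-(n : ℝ) / 2) with hcn
  -- basic facts about K i
  have hKne : ∀ i, (K i).Nonempty := fun i => (hK i).1.1.1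
  have hKcl : ∀ i, IsClosed (K i) := fun i => (hK i).1.1.2.1
  have hKsubC : ∀ i, K i ⊆ C := by
    intro i
    rw [(hK i).2]
    exact inter_subset_left
  have hd0 : ∀ i, 0 ≤ d i := fun i => Metric.infDist_nonneg
  -- ω facts
  have hω_sphere : ∀ i, ω i ⊆ sphere (0 : En n) 1 := fun i =>
    (hsub i).trans inter_subset_left
  have hωmono : ∀ i, ω 0 ⊆ ω i := by
    intro i
    induction i with
    | zero => exact subset_rfl
    | succ j ih =>
      refine ih.trans fun x hx => ?_
      obtain ⟨V, hV, hxV, hVs⟩ := hint j x hx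
      exact hVs ⟨hxV, hω_sphere j hx⟩
  have hωmeas : ∀ i, MeasurableSet (ω i) := fun i => (hcpt i).isClosed.measurableSet
  -- support function bounds
  have hsuppFn : ∀ i, ∀ u ∈ ω i, -(d i) ≤ suppFn (K i) u ∧ suppFn (K i) u ≤ 0 := by
    intro i u hu
    have hu1 : ‖u‖ = 1 := by
      have := (hsub i hu).1
      rwa [mem_sphere_zero_iff_norm] at this
    have hupol : u ∈ polarCone C := interior_subset (hsub i hu).2
    have hub : ∀ v ∈ (fun x => ⟪x, u⟫) '' K i, v ≤ 0 := by
      rintro v ⟨x, hx, rfl⟩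
      have := hupol x (hKsubC i hx)
      rwa [real_inner_comm] at this
    constructor
    · obtain ⟨x₀, hx₀K, hx₀d⟩ := (hKcl i).exists_infDist_eq_dist (hKne i) 0
      have habs : |⟪x₀, u⟫| ≤ ‖x₀‖ * ‖u‖ := abs_real_inner_le_norm _ _
      have h1 : -(d i) ≤ ⟪x₀, u⟫ := by
        have hdx : d i = ‖x₀‖ := by
          rw [show d i = Metric.infDist 0 (K i) from rfl, hx₀d, dist_zero_left]
        rw [hu1, mul_one] at habs
        have := neg_abs_le ⟪x₀, u⟫
        rw [hdx]; linarith [abs_nonneg ⟪x₀, u⟫]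
      exact h1.trans (le_csSup ⟨0, hub⟩ ⟨x₀, hx₀K, rfl⟩)
    · exact Real.sSup_le hub le_rfl
  -- global integrability of Gaussians
  have hGint : Integrable (fun x : En n => Real.exp (-‖x‖ ^ 2 / 2)) := by
    have he : (fun x : En n => Real.exp (-‖x‖ ^ 2 / 2))
        = fun x : En n => Real.exp (-2⁻¹ * ‖x‖ ^ 2) := by
      funext x; congr 1; ring
    rw [he]
    exact integrable_gauss n (b := 2⁻¹) (by norm_num)
  have h4int : Integrable (fun x : En n => Real.exp (-(4⁻¹ : ℝ) * ‖x‖ ^ 2)) :=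
    integrable_gauss n (b := 4⁻¹) (by norm_num)
  set J : ℝ := ∫ x : En n, Real.exp (-(4⁻¹ : ℝ) * ‖x‖ ^ 2) with hJ
  have hJpos : 0 < J := by
    rw [hJ, GaussianFourier.integral_rexp_neg_mul_sq_norm (V := En n) (b := 4⁻¹) (by norm_num : (0:ℝ) < 4⁻¹)]
    positivity
  -- ball construction
  obtain ⟨z, hz⟩ := hC.2.2.2.1
  rw [mem_interior_iff_mem_nhds, Metric.mem_nhds_iff] at hz
  obtain ⟨ε, hε, hball⟩ := hz
  have hzle : ∀ u, u ∈ polarCone C → ‖u‖ = 1 → ⟪u, z⟫ ≤ -(ε / 2) := by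
    intro u hu hu1
    have hmem : z + (ε / 2) • u ∈ C := by
      apply hball
      rw [Metric.mem_ball, dist_eq_norm]
      simp only [add_sub_cancel_left, norm_smul, hu1, mul_one, Real.norm_eq_abs]
      rw [abs_of_pos (by linarith)]
      linarith
    have h0 := hu _ hmem
    rw [inner_add_right, real_inner_smul_right, real_inner_self_eq_norm_sq, hu1] at h0
    nlinarith
  set lam : ℝ := 4 / ε with hlam
  have hlam_pos : 0 < lam := by positivity
  set B : Set (En n) := Metric.closedBall (lam • z) 1 with hB
  have hBC : B ⊆ C := by
    intro x hx
    rw [hB, Metric.mem_closedBall, dist_eq_norm] at hx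
    have hy : lam⁻¹ • x ∈ Metric.ball z ε := by
      rw [Metric.mem_ball, dist_eq_norm]
      have : lam⁻¹ • x - z = lam⁻¹ • (x - lam • z) := by
        rw [smul_sub, smul_smul, inv_mul_cancel₀ hlam_pos.ne', one_smul]
      rw [this, norm_smul, Real.norm_eq_abs, abs_of_pos (by positivity)]
      have h1 : lam⁻¹ * ‖x - lam • z‖ ≤ lam⁻¹ := by
        nlinarith [norm_nonneg (x - lam • z), inv_pos.mpr hlam_pos]
      have h2 : lam⁻¹ = ε / 4 := by rw [hlam]; field_simp
      linarith
    have := hC.2.2.1 _ (hball hy) lam hlam_pos.le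
    rwa [smul_inv_smul₀ hlam_pos.ne'] at this
  have hBinner : ∀ x ∈ B, ∀ u, u ∈ polarCone C → ‖u‖ = 1 → ⟪x, u⟫ ≤ -1 := by
    intro x hx u hu hu1
    rw [hB, Metric.mem_closedBall, dist_eq_norm] at hx
    have h1 : ⟪x - lam • z, u⟫ ≤ 1 := by
      have := real_inner_le_norm (x - lam • z) u
      rw [hu1, mul_one] at this
      linarith
    have h2 : ⟪lam • z, u⟫ ≤ -2 := by
      rw [real_inner_smul_left, real_inner_comm]
      have := hzle u hu hu1
      have hε2 : lam * (ε / 2) = 2 := by rw [hlam]; field_simp; ring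
      nlinarith
    have h3 : ⟪x, u⟫ = ⟪lam • z, u⟫ + ⟪x - lam • z, u⟫ := by
      rw [← inner_add_left]; congr 1; abel
    linarith
  have hBW : ∀ i, B ⊆ wulffShape C (ω i) (fun _ => (1 : ℝ)) := by
    intro i x hx
    refine ⟨hBC hx, ?_⟩
    simp only [mem_iInter, mem_setOf_eq]
    intro u hu
    have hu1 : ‖u‖ = 1 := by
      have := (hsub i hu).1
      rwa [mem_sphere_zero_iff_norm] at this
    have := hBinner x hx u (interior_subset (hsub i hu).2) hu1
    simpa using this
  -- positivity of the Gaussian integral over B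
  have hBGpos : 0 < ∫ x in B, Real.exp (-‖x‖ ^ 2 / 2) := by
    set R : ℝ := ‖lam • z‖ + 1 with hR
    have hRpos : 0 < R := by positivity
    have hlow : ∀ x ∈ B, Real.exp (-R ^ 2 / 2) ≤ Real.exp (-‖x‖ ^ 2 / 2) := by
      intro x hx
      rw [hB, Metric.mem_closedBall, dist_eq_norm] at hx
      have hxR : ‖x‖ ≤ R := by
        have := norm_sub_norm_le x (lam • z)
        rw [hR]; linarith
      apply Real.exp_le_exp.mpr
      nlinarith [norm_nonneg x]
    have hmeas : MeasurableSet B := Metric.isClosed_closedBall.measurableSet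
    have hfin : volume B ≠ ⊤ := (measure_closedBall_lt_top).ne
    have := setIntegral_ge_of_const_le hmeas hfin hlow hGint.integrableOn
    have hvol : 0 < (volume B).toReal := by
      refine ENNReal.toReal_pos ?_ hfin
      exact (measure_closedBall_pos _ _ one_pos).ne'
    calc (0:ℝ) < Real.exp (-R ^ 2 / 2) * (volume B).toReal := by positivity
    _ ≤ _ := by rw [smul_eq_mul, mul_comm] at this; exact this
  -- the main inequality chain, for each i
  set μT : ℝ := (μ Set.univ).toReal with hμT
  have hμTpos : 0 < μT :=
    ENNReal.toReal_pos (fun h => hμ (Measure.measure_univ_eq_zero.mp h)) (measure_ne_top μ _)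
  set a : ℝ := cn * (∫ x in B, Real.exp (-‖x‖ ^ 2 / 2)) * (μ (ω 0)).toReal with ha
  have hμω0pos : 0 < (μ (ω 0)).toReal := ENNReal.toReal_pos hμω0 (measure_ne_top μ _)
  have hapos : 0 < a := by rw [ha]; positivity
  set c₀ : ℝ := cn * J * μT with hc₀
  have hc₀pos : 0 < c₀ := by rw [hc₀]; positivity
  have key : ∀ i, a ≤ c₀ * (Real.exp (-(d i) ^ 2 / 4) * d i ^ p) := by
    intro i
    -- lower bound of LHS of hmax
    have h2 := hmax i (fun _ => (1 : ℝ)) continuousOn_const (fun u _ => one_pos)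
    have hint1 : ∫ u in ω i, ((1:ℝ)) ^ p ∂μ = (μ (ω i)).toReal := by
      simp [Real.one_rpow]; rfl
    rw [hint1] at h2
    have hμmono : (μ (ω 0)).toReal ≤ (μ (ω i)).toReal :=
      ENNReal.toReal_mono (measure_ne_top μ _) (measure_mono (hωmono i))
    have hBle : (∫ x in B, Real.exp (-‖x‖ ^ 2 / 2)) ≤
        ∫ x in wulffShape C (ω i) (fun _ => (1:ℝ)), Real.exp (-‖x‖ ^ 2 / 2) := by
      refine setIntegral_mono_set hGint.integrableOn ?_ ((hBW i).eventuallyLE)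
      exact Filter.Eventually.of_forall fun x => (Real.exp_pos _).le
    have hWnonneg : 0 ≤ ∫ x in wulffShape C (ω i) (fun _ => (1:ℝ)),
        Real.exp (-‖x‖ ^ 2 / 2) := integral_nonneg fun x => (Real.exp_pos _).le
    have h1 : a ≤ gaussianMeasure n (wulffShape C (ω i) (fun _ => (1:ℝ))) *
        (μ (ω i)).toReal := by
      rw [ha, gaussianMeasure]
      apply mul_le_mul _ hμmono (ENNReal.toReal_nonneg) _
      · exact mul_le_mul_of_nonneg_left hBle cn_pos.le
      · positivity
    -- upper bound of RHS of hmax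
    have hKmeas : MeasurableSet (K i) := (hKcl i).measurableSet
    have hKint : ∫ x in K i, Real.exp (-‖x‖ ^ 2 / 2) ≤
        Real.exp (-(d i) ^ 2 / 4) * J := by
      have hptwise : ∀ x ∈ K i, Real.exp (-‖x‖ ^ 2 / 2) ≤
          Real.exp (-(d i) ^ 2 / 4) * Real.exp (-(4⁻¹ : ℝ) * ‖x‖ ^ 2) := by
        intro x hx
        have hdx : d i ≤ ‖x‖ := by
          rw [hd]
          simpa [dist_zero_left] using Metric.infDist_le_dist_of_mem (x := (0 : En n)) hx
        rw [← Real.exp_add]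
        apply Real.exp_le_exp.mpr
        nlinarith [hd0 i]
      calc ∫ x in K i, Real.exp (-‖x‖ ^ 2 / 2)
          ≤ ∫ x in K i, Real.exp (-(d i) ^ 2 / 4) * Real.exp (-(4⁻¹ : ℝ) * ‖x‖ ^ 2) :=
            setIntegral_mono_on hGint.integrableOn
              ((h4int.const_mul _).integrableOn) hKmeas hptwise
        _ = Real.exp (-(d i) ^ 2 / 4) * ∫ x in K i, Real.exp (-(4⁻¹ : ℝ) * ‖x‖ ^ 2) := by
            rw [integral_const_mul]
        _ ≤ Real.exp (-(d i) ^ 2 / 4) * J := by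
            apply mul_le_mul_of_nonneg_left _ (Real.exp_pos _).le
            rw [hJ]
            exact setIntegral_le_integral h4int
              (Filter.Eventually.of_forall fun x => (Real.exp_pos _).le)
    have hγK : gaussianMeasure n (K i) ≤ cn * (Real.exp (-(d i) ^ 2 / 4) * J) := by
      rw [gaussianMeasure]
      exact mul_le_mul_of_nonneg_left hKint cn_pos.le
    have hγKnonneg : 0 ≤ gaussianMeasure n (K i) := by
      rw [gaussianMeasure]
      exact mul_nonneg cn_pos.le (integral_nonneg fun x => (Real.exp_pos _).le)
    have hSint : ∫ u in ω i, (-suppFn (K i) u) ^ p ∂μ ≤ d i ^ p * μT := by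
      have hbound : ∀ᵐ u ∂μ.restrict (ω i), ‖(-suppFn (K i) u) ^ p‖ ≤ d i ^ p := by
        refine ae_restrict_of_forall_mem (hωmeas i) fun u hu => ?_
        obtain ⟨hl, hr⟩ := hsuppFn i u hu
        rw [Real.norm_eq_abs, abs_of_nonneg (Real.rpow_nonneg (by linarith) _)]
        exact Real.rpow_le_rpow (by linarith) (by linarith) hp.le
      have := norm_integral_le_of_norm_le_const hbound
      rw [Real.norm_eq_abs] at this
      have h5 : (μ.restrict (ω i) Set.univ).toReal ≤ μT := by
        rw [Measure.restrict_apply_univ, hμT]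
        exact ENNReal.toReal_mono (measure_ne_top μ _) (measure_mono (subset_univ _))
      have h6 := le_trans (le_abs_self _) this
      have h7 : d i ^ p * (μ.restrict (ω i) Set.univ).toReal ≤ d i ^ p * μT :=
        mul_le_mul_of_nonneg_left h5 (Real.rpow_nonneg (hd0 i) _)
      exact le_trans h6 h7
    have hSnonneg : 0 ≤ ∫ u in ω i, (-suppFn (K i) u) ^ p ∂μ := by
      refine setIntegral_nonneg (hωmeas i) fun u hu => ?_
      exact Real.rpow_nonneg (by linarith [(hsuppFn i u hu).2]) _
    have h8 : gaussianMeasure n (K i) * ∫ u in ω i, (-suppFn (K i) u) ^ p ∂μ ≤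
        (cn * (Real.exp (-(d i) ^ 2 / 4) * J)) * (d i ^ p * μT) :=
      mul_le_mul hγK hSint hSnonneg (by positivity)
    have h9 : (cn * (Real.exp (-(d i) ^ 2 / 4) * J)) * (d i ^ p * μT) =
        c₀ * (Real.exp (-(d i) ^ 2 / 4) * d i ^ p) := by rw [hc₀]; ring
    linarith
  -- lower bound
  set m : ℝ := (a / c₀) ^ p⁻¹ / 2 with hm
  have hmpos : 0 < m := by
    rw [hm]
    have := Real.rpow_pos_of_pos (div_pos hapos hc₀pos) p⁻¹
    linarith
  have hlow : ∀ i, m < d i := by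
    intro i
    have h1 : a ≤ c₀ * d i ^ p := by
      have h2 := key i
      have h3 : Real.exp (-(d i) ^ 2 / 4) ≤ 1 := by
        apply Real.exp_le_one_iff.mpr
        nlinarith [hd0 i]
      have hdpnn : 0 ≤ d i ^ p := Real.rpow_nonneg (hd0 i) p
      have h5 : Real.exp (-(d i) ^ 2 / 4) * d i ^ p ≤ d i ^ p := by
        calc Real.exp (-(d i) ^ 2 / 4) * d i ^ p ≤ 1 * d i ^ p :=
              mul_le_mul_of_nonneg_right h3 hdpnn
          _ = d i ^ p := one_mul _
      have h6 : c₀ * (Real.exp (-(d i) ^ 2 / 4) * d i ^ p) ≤ c₀ * (d i ^ p) :=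
        mul_le_mul_of_nonneg_left h5 hc₀pos.le
      linarith
    have h4 : a / c₀ ≤ d i ^ p := (div_le_iff₀ hc₀pos).mpr (by linarith [mul_comm c₀ (d i ^ p)])
    have h5 : (a / c₀) ^ p⁻¹ ≤ (d i ^ p) ^ p⁻¹ :=
      Real.rpow_le_rpow (le_of_lt (div_pos hapos hc₀pos)) h4 (by positivity)
    have h6 : (d i ^ p) ^ p⁻¹ = d i := Real.rpow_rpow_inv (hd0 i) hp.ne' 
    rw [h6] at h5
    have := Real.rpow_pos_of_pos (div_pos hapos hc₀pos) p⁻¹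
    rw [hm]; linarith
  -- upper bound
  have htend : Filter.Tendsto (fun t : ℝ => c₀ * (t ^ (p / 2) * Real.exp (-(4⁻¹ : ℝ) * t)))
      Filter.atTop (𝓝 0) := by
    have := (tendsto_rpow_mul_exp_neg_mul_atTop_nhds_zero (p / 2) 4⁻¹ (by norm_num)).const_mul c₀
    simpa using this
  have htend2 : Filter.Tendsto
      (fun s : ℝ => c₀ * ((s ^ 2) ^ (p / 2) * Real.exp (-(4⁻¹ : ℝ) * s ^ 2)))
      Filter.atTop (𝓝 0) :=
    htend.comp (tendsto_pow_atTop two_ne_zero)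
  have hev : ∀ᶠ s : ℝ in Filter.atTop,
      c₀ * ((s ^ 2) ^ (p / 2) * Real.exp (-(4⁻¹ : ℝ) * s ^ 2)) < a :=
    htend2.eventually_lt_const hapos
  obtain ⟨M₁, hM₁⟩ := Filter.eventually_atTop.mp (hev.and (Filter.eventually_ge_atTop (0:ℝ)))
  refine ⟨m, max M₁ (m + 1), hmpos,
    lt_of_lt_of_le (by linarith) (le_max_right _ _), fun i => ⟨hlow i, ?_⟩⟩
  have hdM : d i < M₁ := by
    by_contra hcon
    push_neg at hcon
    obtain ⟨h1, h2⟩ := hM₁ (d i) hcon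
    have e1 : ((d i) ^ 2) ^ (p / 2) = d i ^ p := by
      rw [← Real.rpow_natCast (d i) 2, ← Real.rpow_mul (hd0 i)]
      congr 1
      push_cast
      ring
    have e2 : Real.exp (-(4⁻¹ : ℝ) * d i ^ 2) = Real.exp (-(d i) ^ 2 / 4) := by
      congr 1; ring
    rw [e1, e2] at h1
    have h3 := key i
    have h4 : c₀ * (d i ^ p * Real.exp (-(d i) ^ 2 / 4)) =
        c₀ * (Real.exp (-(d i) ^ 2 / 4) * d i ^ p) := by ring
    linarith
  exact lt_of_lt_of_le hdM (le_max_left _ _)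
end

section
/- Let C ⊆ ℝⁿ be a pointed n-dimensional closed convex cone, p < 0, and μ a nonzero finite Borel measure on Ω = S^{n-1} ∩ int C°. Let (ω_i)_{i∈ℕ} be nonempty compact subsets of Ω with ω_i contained in the interior of ω_{i+1} relative to S^{n-1}, ⋃_i ω_i = Ω, and μ restricted to ω_0 nonzero. For each i, let K_i ∈ 𝒦(C,ω_i) be such that γⁿ(K_i) / ∫_{ω_i} (−h_{K_i})^p dμ ≥ γⁿ([f]) / ∫_{ω_i} f^p dμ for every continuous f : ω_i → (0,∞) (i.e. K_i maximizes φ_{μ⌞ω_i}). Then there exist constants 0 < m < M such that m < dist(0, K_i) < M for all i ∈ ℕ. -/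
open MeasureTheory Metric Set Filter
open scoped RealInnerProductSpace Pointwise Topology ENNReal

/-- Integrability of Gaussian-type functions on `En n`. -/
lemma integrable_gauss_en {n : ℕ} {b : ℝ} (hb : 0 < b) :
    Integrable (fun v : En n => Real.exp (-b * ‖v‖ ^ 2)) := by
  have h := (GaussianFourier.integrable_cexp_neg_mul_sq_norm_add
    (b := (b : ℂ)) (by simpa using hb) 0 (0 : En n)).norm
  refine h.congr (Filter.Eventually.of_forall fun v => ?_)
  simp only [Complex.norm_exp]
  norm_num
  left
  norm_cast

/-- The polar cone is closed. -/
lemma polarCone_isClosed {n : ℕ} (C : Set (En n)) : IsClosed (polarCone C) := by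
  have : polarCone C = ⋂ y ∈ C, {x : En n | ⟪x, y⟫ ≤ 0} := by
    ext x; simp [polarCone]
  rw [this]
  exact isClosed_biInter fun y _ =>
    isClosed_le (Continuous.inner continuous_id continuous_const) continuous_const

set_option maxHeartbeats 2000000 in
/-- Uniform bounds on `dist(0, K_i)` for maximizers `K_i` of `φ_{μ⌞ω_i}` (case `p < 0`),
where `(ω_i)` is an increasing exhaustion of `Ω` by nonempty compact sets, each contained in
the interior of the next relative to the sphere. -/
theorem uniform_estimate_p_neg {n : ℕ} (hn : 1 ≤ n) (C : Set (En n)) (hC : IsPointedCone C)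
    (p : ℝ) (hp : p < 0)
    (μ : Measure (En n)) [IsFiniteMeasure μ] (hμsupp : μ (OmegaSet C)ᶜ = 0) (hμ : μ ≠ 0)
    (ω : ℕ → Set (En n)) (hne : ∀ i, (ω i).Nonempty) (hcpt : ∀ i, IsCompact (ω i))
    (hsub : ∀ i, ω i ⊆ OmegaSet C)
    (hint : ∀ i, ∀ x ∈ ω i, ∃ V : Set (En n),
      IsOpen V ∧ x ∈ V ∧ V ∩ sphere (0 : En n) 1 ⊆ ω (i + 1))
    (hunion : ⋃ i, ω i = OmegaSet C)
    (hμω0 : μ (ω 0) ≠ 0)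
    (K : ℕ → Set (En n)) (hK : ∀ i, InKClass C (ω i) (K i))
    (hmax : ∀ i, ∀ f : En n → ℝ, ContinuousOn f (ω i) → (∀ u ∈ ω i, 0 < f u) →
      gaussianMeasure n (wulffShape C (ω i) f) / ∫ u in ω i, f u ^ p ∂μ ≤
        gaussianMeasure n (K i) / ∫ u in ω i, (-suppFn (K i) u) ^ p ∂μ) :
    ∃ m M : ℝ, 0 < m ∧ m < M ∧
      ∀ i, m < Metric.infDist 0 (K i) ∧ Metric.infDist 0 (K i) < M := by
  classical
  obtain ⟨hCclosed, hCconv, hCscale, ⟨x₀, hx₀⟩, hCpt⟩ := hC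
  have hx₀C : x₀ ∈ C := interior_subset hx₀
  obtain ⟨ρ, hρ, hρball⟩ : ∃ ρ > 0, ball x₀ ρ ⊆ C := by
    obtain ⟨ρ, hρ, h⟩ := Metric.isOpen_iff.1 isOpen_interior x₀ hx₀
    exact ⟨ρ, hρ, h.trans interior_subset⟩
  -- the compact set S = sphere ∩ polar cone
  set S : Set (En n) := sphere (0 : En n) 1 ∩ polarCone C with hS
  have hScpt : IsCompact S :=
    (isCompact_sphere 0 1).inter_right (polarCone_isClosed C)
  have hΩS : OmegaSet C ⊆ S := fun u hu => ⟨hu.1, interior_subset hu.2⟩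
  have hSne : S.Nonempty := by
    obtain ⟨u, hu⟩ := hne 0
    exact ⟨u, hΩS (hsub 0 hu)⟩
  -- x₀ pairs strictly negatively with every u ∈ S
  have hneg : ∀ u ∈ S, ⟪x₀, u⟫ < 0 := by
    rintro u ⟨hu1, hu2⟩
    have hu0 : ⟪u, x₀⟫ ≤ 0 := hu2 x₀ hx₀C
    rcases lt_or_eq_of_le hu0 with h | h
    · rwa [real_inner_comm] at h
    · exfalso
      have hy : x₀ + (ρ / 2) • u ∈ C := by
        apply hρball
        have hnu : ‖u‖ = 1 := mem_sphere_zero_iff_norm.1 hu1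
        simp [dist_eq_norm, norm_smul, hnu, abs_of_pos hρ]
        linarith
      have := hu2 _ hy
      rw [inner_add_right, real_inner_smul_right, ← h] at this
      have hnu : ‖u‖ = 1 := mem_sphere_zero_iff_norm.1 hu1
      rw [real_inner_self_eq_norm_sq, hnu] at this
      nlinarith [half_pos hρ]
  -- uniform δ by compactness
  obtain ⟨u₀, hu₀S, hu₀max⟩ := hScpt.exists_isMaxOn hSne
    (Continuous.continuousOn (f := fun u : En n => ⟪x₀, u⟫)
      (Continuous.inner continuous_const continuous_id))
  set δ : ℝ := -⟪x₀, u₀⟫ with hδdef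
  have hδ : 0 < δ := by simpa [hδdef] using hneg u₀ hu₀S
  set lam : ℝ := 2 / δ with hlamdef
  have hlam : 0 < lam := by positivity
  set z : En n := lam • x₀ with hzdef
  set r : ℝ := min (lam * ρ) 1 with hrdef
  have hr : 0 < r := lt_min (by positivity) one_pos
  -- the ball is in C
  have hballC : ball z r ⊆ C := by
    intro y hy
    have h1 : lam⁻¹ • y ∈ ball x₀ ρ := by
      rw [mem_ball, dist_eq_norm]
      have : lam⁻¹ • y - x₀ = lam⁻¹ • (y - z) := by
        rw [smul_sub, hzdef, smul_smul, inv_mul_cancel₀ hlam.ne', one_smul]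
      rw [this, norm_smul, Real.norm_eq_abs, abs_of_pos (inv_pos.2 hlam)]
      have hyz : ‖y - z‖ < r := by rwa [mem_ball, dist_eq_norm] at hy
      have : r ≤ lam * ρ := min_le_left _ _
      calc lam⁻¹ * ‖y - z‖ < lam⁻¹ * (lam * ρ) := by
            apply mul_lt_mul_of_pos_left (lt_of_lt_of_le hyz this) (inv_pos.2 hlam)
        _ = ρ := by field_simp
    have h2 : lam • (lam⁻¹ • y) ∈ C := hCscale _ (hρball h1) lam hlam.le
    rwa [smul_smul, mul_inv_cancel₀ hlam.ne', one_smul] at h2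
  -- the ball is in every Wulff shape of the constant function 1
  have hballW : ∀ i, ball z r ⊆ wulffShape C (ω i) (fun _ => 1) := by
    intro i y hy
    refine ⟨hballC hy, ?_⟩
    simp only [mem_iInter, mem_setOf_eq]
    intro u hu
    have huS : u ∈ S := hΩS (hsub i hu)
    have hnu : ‖u‖ = 1 := mem_sphere_zero_iff_norm.1 huS.1
    have hzu : ⟪z, u⟫ ≤ -2 := by
      rw [hzdef, real_inner_smul_left]
      have h1 : ⟪x₀, u⟫ ≤ -δ := by simpa [hδdef] using hu₀max huS
      calc lam * ⟪x₀, u⟫ ≤ lam * (-δ) := by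
            exact mul_le_mul_of_nonneg_left h1 hlam.le
        _ = -2 := by rw [hlamdef]; field_simp
    have hyz : ⟪y - z, u⟫ ≤ 1 := by
      calc ⟪y - z, u⟫ ≤ ‖y - z‖ * ‖u‖ := real_inner_le_norm _ _
        _ = ‖y - z‖ := by rw [hnu, mul_one]
        _ ≤ 1 := by
            have hyz : ‖y - z‖ < r := by rwa [mem_ball, dist_eq_norm] at hy
            exact le_of_lt (lt_of_lt_of_le hyz (min_le_right _ _))
    have heq : ⟪y, u⟫ = ⟪z, u⟫ + ⟪y - z, u⟫ := by
      rw [← inner_add_left, add_sub_cancel]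
    rw [heq]; linarith
  -- Gaussian integrability
  have hg2 : Integrable (fun x : En n => Real.exp (-‖x‖ ^ 2 / 2)) := by
    have := integrable_gauss_en (n := n) (b := 1/2) (by norm_num)
    refine this.congr (Filter.Eventually.of_forall fun v => ?_)
    ring_nf
  have hg4 : Integrable (fun x : En n => Real.exp (-‖x‖ ^ 2 / 4)) := by
    have := integrable_gauss_en (n := n) (b := 1/4) (by norm_num)
    refine this.congr (Filter.Eventually.of_forall fun v => ?_)
    ring_nf
  set coef : ℝ := (2 * Real.pi) ^ (-(n : ℝ) / 2) with hcoefdef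
  have hcoef : 0 < coef := Real.rpow_pos_of_pos (by positivity) _
  -- positivity of a = gaussianMeasure of the ball
  set a : ℝ := gaussianMeasure n (ball z r) with hadef
  have hWmeas : ∀ i, MeasurableSet (wulffShape C (ω i) (fun _ => 1)) := by
    intro i
    apply IsClosed.measurableSet
    apply IsClosed.inter hCclosed
    exact isClosed_biInter fun u _ =>
      isClosed_le (Continuous.inner continuous_id continuous_const) continuous_const
  have ha : 0 < a := by
    rw [hadef, gaussianMeasure]
    apply mul_pos hcoef
    set R : ℝ := ‖z‖ + r with hRdef
    have hR : 0 < R := by positivity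
    have hlow : ∀ x ∈ ball z r, Real.exp (-R ^ 2 / 2) ≤ Real.exp (-‖x‖ ^ 2 / 2) := by
      intro x hx
      apply Real.exp_le_exp.2
      have hx' : ‖x‖ < R := by
        have : ‖x - z‖ < r := by rwa [mem_ball, dist_eq_norm] at hx
        calc ‖x‖ = ‖z + (x - z)‖ := by rw [add_sub_cancel]
          _ ≤ ‖z‖ + ‖x - z‖ := norm_add_le _ _
          _ < R := by rw [hRdef]; linarith
      nlinarith [norm_nonneg x]
    have h1 : ∫ x in ball z r, Real.exp (-R ^ 2 / 2) ≤
        ∫ x in ball z r, Real.exp (-‖x‖ ^ 2 / 2) := by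
      apply setIntegral_mono_on
      · exact integrableOn_const measure_ball_lt_top.ne
      · exact hg2.integrableOn
      · exact measurableSet_ball
      · exact hlow
    have h2 : 0 < ∫ x in ball z r, Real.exp (-R ^ 2 / 2) := by
      rw [setIntegral_const]
      apply mul_pos _ (Real.exp_pos _)
      exact ENNReal.toReal_pos (measure_ball_pos volume z hr).ne' measure_ball_lt_top.ne
    linarith
  -- measure quantities
  set Bmax : ℝ := (μ Set.univ).toReal with hBmaxdef
  have hμuniv : μ Set.univ ≠ 0 := by
    intro h
    exact hμ (Measure.measure_univ_eq_zero.1 h)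
  have hBmax : 0 < Bmax :=
    ENNReal.toReal_pos hμuniv (measure_ne_top μ _)
  set μ0 : ℝ := (μ (ω 0)).toReal with hμ0def
  have hμ0 : 0 < μ0 := ENNReal.toReal_pos hμω0 (measure_ne_top μ _)
  set b : ℝ := a / Bmax with hbdef
  have hb : 0 < b := div_pos ha hBmax
  -- monotonicity of ω
  have hωmono : ∀ i, ω i ⊆ ω (i + 1) := by
    intro i x hx
    obtain ⟨V, hVo, hxV, hV⟩ := hint i x hx
    exact hV ⟨hxV, (hsub i hx).1⟩
  have hω0 : ∀ i, ω 0 ⊆ ω i := by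
    intro i
    induction i with
    | zero => exact subset_rfl
    | succ k ih => exact ih.trans (hωmono k)
  have hωmeas : ∀ i, MeasurableSet (ω i) := fun i => (hcpt i).isClosed.measurableSet
  -- the tail constant
  set I4 : ℝ := ∫ x : En n, Real.exp (-‖x‖ ^ 2 / 4) with hI4def
  have hI4nonneg : 0 ≤ I4 := integral_nonneg fun x => (Real.exp_pos _).le
  set Γ : ℝ := coef * I4 with hΓdef
  have hΓnonneg : 0 ≤ Γ := mul_nonneg hcoef.le hI4nonneg
  -- THE KEY ESTIMATE, for every i
  have key : ∀ i, 0 < Metric.infDist 0 (K i) ∧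
      b * μ0 * (Metric.infDist 0 (K i)) ^ p ≤
        Γ * Real.exp (-(Metric.infDist 0 (K i)) ^ 2 / 4) := by
    intro i
    obtain ⟨⟨⟨hKne, hKcl, hKconv, hK0, hKsc⟩, hKrec⟩, hKeq⟩ := hK i
    set d : ℝ := Metric.infDist 0 (K i) with hddef
    have hd : 0 < d := (hKcl.notMem_iff_infDist_pos hKne).1 hK0
    refine ⟨hd, ?_⟩
    have hKsubC : K i ⊆ C := by
      intro x hx
      rw [hKeq] at hx
      exact hx.1
    have hnormge : ∀ x ∈ K i, d ≤ ‖x‖ := by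
      intro x hx
      have := infDist_le_dist_of_mem (x := (0 : En n)) hx
      rwa [dist_zero_left] at this
    -- support function bounds on ω i
    have hsupp : ∀ u ∈ ω i, 0 < -suppFn (K i) u ∧ -suppFn (K i) u ≤ d := by
      intro u hu
      have huΩ := hsub i hu
      have hnu : ‖u‖ = 1 := mem_sphere_zero_iff_norm.1 huΩ.1
      have hbdd : BddAbove ((fun x => ⟪x, u⟫) '' K i) := by
        refine ⟨0, ?_⟩
        rintro t ⟨x, hx, rfl⟩
        have := (interior_subset huΩ.2 : u ∈ polarCone C) x (hKsubC hx)
        rwa [real_inner_comm] at this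
      have hKimne : ((fun x => ⟪x, u⟫) '' K i).Nonempty := hKne.image _
      constructor
      · -- suppFn < 0
        obtain ⟨ε, hε, hball⟩ : ∃ ε > 0, ball u ε ⊆ polarCone C := by
          obtain ⟨ε, hε, h⟩ := Metric.isOpen_iff.1 isOpen_interior u huΩ.2
          exact ⟨ε, hε, h.trans interior_subset⟩
        have hub : ∀ t ∈ (fun x => ⟪x, u⟫) '' K i, t ≤ -(ε / 2) * d := by
          rintro t ⟨x, hx, rfl⟩
          have hxC := hKsubC hx
          have hx0 : x ≠ 0 := fun h => hK0 (h ▸ hx)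
          have hxpos : 0 < ‖x‖ := norm_pos_iff.2 hx0
          have hv : u + (ε / 2 / ‖x‖) • x ∈ polarCone C := by
            apply hball
            rw [mem_ball, dist_eq_norm]
            have : u + (ε / 2 / ‖x‖) • x - u = (ε / 2 / ‖x‖) • x := by abel
            rw [this, norm_smul, Real.norm_eq_abs,
              abs_of_pos (by positivity : (0:ℝ) < ε / 2 / ‖x‖)]
            rw [div_mul_cancel₀ _ hxpos.ne']
            linarith
          have h1 := hv x hxC
          rw [inner_add_left, real_inner_smul_left, real_inner_self_eq_norm_sq] at h1
          have h2 : ⟪u, x⟫ ≤ -(ε / 2) * ‖x‖ := by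
            have : ε / 2 / ‖x‖ * ‖x‖ ^ 2 = ε / 2 * ‖x‖ := by field_simp
            nlinarith
          have h3 : -(ε / 2) * ‖x‖ ≤ -(ε / 2) * d := by
            have := hnormge x hx
            nlinarith
          show ⟪x, u⟫ ≤ -(ε / 2) * d
          rw [real_inner_comm]
          linarith
        have := csSup_le hKimne hub
        have hεd : 0 < ε / 2 * d := by positivity
        simp only [suppFn]
        nlinarith
      · -- -suppFn ≤ d
        by_contra hlt
        push_neg at hlt
        obtain ⟨x, hx, hxd⟩ := (infDist_lt_iff hKne).1 (hddef ▸ hlt)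
        rw [dist_zero_left] at hxd
        have h1 : ⟪x, u⟫ ≤ suppFn (K i) u := le_csSup hbdd ⟨x, hx, rfl⟩
        have h2 : -‖x‖ ≤ ⟪x, u⟫ := by
          have := abs_real_inner_le_norm x u
          rw [hnu, mul_one] at this
          cases abs_le.1 this with
          | intro hl hr => linarith
        linarith
    -- the integral with the support function
    set D : ℝ := ∫ u in ω i, (-suppFn (K i) u) ^ p ∂μ with hDdef
    have hD0 : 0 ≤ D :=
      setIntegral_nonneg (hωmeas i) fun u hu => Real.rpow_nonneg (hsupp u hu).1.le p
    -- apply the maximality with the constant function 1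
    have hstep := hmax i (fun _ => 1) continuousOn_const (fun u _ => one_pos)
    have hden : (∫ u in ω i, (fun _ : En n => (1:ℝ)) u ^ p ∂μ) = (μ (ω i)).toReal := by
      simp only [Real.one_rpow]
      simp [integral_const, Measure.restrict_apply_univ]
      rfl
    rw [hden] at hstep
    have hBi : 0 < (μ (ω i)).toReal := by
      refine ENNReal.toReal_pos (fun h => hμω0 (measure_mono_null (hω0 i) h)) (measure_ne_top μ _)
    have hBiBmax : (μ (ω i)).toReal ≤ Bmax :=
      ENNReal.toReal_mono (measure_ne_top μ _) (measure_mono (subset_univ _))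
    have hAi : a ≤ gaussianMeasure n (wulffShape C (ω i) (fun _ => 1)) := by
      rw [hadef, gaussianMeasure, gaussianMeasure]
      apply mul_le_mul_of_nonneg_left _ hcoef.le
      exact setIntegral_mono_set hg2.integrableOn
        (Filter.Eventually.of_forall fun x => (Real.exp_pos _).le)
        ((hballW i).eventuallyLE)
    have hb_le : b ≤ gaussianMeasure n (K i) / D := by
      refine le_trans ?_ hstep
      rw [hbdef]
      exact div_le_div₀ (ha.le.trans hAi) hAi hBi hBiBmax
    have hDpos : 0 < D := by
      rcases hD0.lt_or_eq with h | h
      · exact h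
      · exfalso
        rw [← h, div_zero] at hb_le
        linarith
    have hInt : IntegrableOn (fun u => (-suppFn (K i) u) ^ p) (ω i) μ := by
      by_contra hni
      rw [hDdef] at hDpos
      rw [integral_undef hni] at hDpos
      exact lt_irrefl _ hDpos
    have hDlow : d ^ p * μ0 ≤ D := by
      have h1 : ∫ _ in ω i, d ^ p ∂μ ≤ D := by
        rw [hDdef]
        refine setIntegral_mono_on (integrableOn_const (measure_lt_top μ _).ne)
          hInt (hωmeas i) fun u hu => ?_
        exact Real.rpow_le_rpow_of_nonpos (hsupp u hu).1 (hsupp u hu).2 hp.le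
      rw [setIntegral_const, smul_eq_mul] at h1
      rw [Measure.real] at h1
      have h2 : μ0 ≤ (μ (ω i)).toReal :=
        ENNReal.toReal_mono (measure_ne_top μ _) (measure_mono (hω0 i))
      have h3 : 0 ≤ d ^ p := Real.rpow_nonneg hd.le p
      nlinarith
    have hGup : gaussianMeasure n (K i) ≤ Γ * Real.exp (-d ^ 2 / 4) := by
      rw [gaussianMeasure]
      have h1 : ∫ x in K i, Real.exp (-‖x‖ ^ 2 / 2) ≤
          ∫ x in K i, Real.exp (-d ^ 2 / 4) * Real.exp (-‖x‖ ^ 2 / 4) := by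
        refine setIntegral_mono_on hg2.integrableOn
          ((hg4.const_mul _).integrableOn) hKcl.measurableSet fun x hx => ?_
        rw [← Real.exp_add]
        apply Real.exp_le_exp.2
        have := hnormge x hx
        nlinarith [norm_nonneg x]
      have h2 : ∫ x in K i, Real.exp (-d ^ 2 / 4) * Real.exp (-‖x‖ ^ 2 / 4) =
          Real.exp (-d ^ 2 / 4) * ∫ x in K i, Real.exp (-‖x‖ ^ 2 / 4) :=
        integral_const_mul _ _
      have h3 : ∫ x in K i, Real.exp (-‖x‖ ^ 2 / 4) ≤ I4 :=
        setIntegral_le_integral hg4 (Filter.Eventually.of_forall fun x => (Real.exp_pos _).le)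
      have h4 : ∫ x in K i, Real.exp (-‖x‖ ^ 2 / 2) ≤ Real.exp (-d ^ 2 / 4) * I4 := by
        rw [h2] at h1
        refine h1.trans ?_
        exact mul_le_mul_of_nonneg_left h3 (Real.exp_pos _).le
      calc coef * ∫ x in K i, Real.exp (-‖x‖ ^ 2 / 2)
          ≤ coef * (Real.exp (-d ^ 2 / 4) * I4) := mul_le_mul_of_nonneg_left h4 hcoef.le
        _ = Γ * Real.exp (-d ^ 2 / 4) := by rw [hΓdef]; ring
    have h5 : b * D ≤ gaussianMeasure n (K i) := (le_div_iff₀ hDpos).1 hb_le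
    calc b * μ0 * d ^ p = b * (d ^ p * μ0) := by ring
      _ ≤ b * D := mul_le_mul_of_nonneg_left hDlow hb.le
      _ ≤ gaussianMeasure n (K i) := h5
      _ ≤ Γ * Real.exp (-d ^ 2 / 4) := hGup
  -- now derive the uniform bounds
  have hbμ : 0 < b * μ0 := mul_pos hb hμ0
  set c2 : ℝ := Γ / (b * μ0) with hc2def
  have hc2nonneg : 0 ≤ c2 := div_nonneg hΓnonneg hbμ.le
  have hdp_le : ∀ i, (Metric.infDist 0 (K i)) ^ p ≤
      c2 * Real.exp (-(Metric.infDist 0 (K i)) ^ 2 / 4) := by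
    intro i
    have h := (key i).2
    have : (Metric.infDist 0 (K i)) ^ p * (b * μ0) ≤
        Γ * Real.exp (-(Metric.infDist 0 (K i)) ^ 2 / 4) := by linarith
    have h2 := (le_div_iff₀ hbμ).2 this
    refine h2.trans_eq ?_
    rw [hc2def]; ring
  have hdple : ∀ i, (Metric.infDist 0 (K i)) ^ p ≤ c2 := by
    intro i
    refine (hdp_le i).trans ?_
    have h1 : Real.exp (-(Metric.infDist 0 (K i)) ^ 2 / 4) ≤ 1 :=
      Real.exp_le_one_iff.2 (by nlinarith [sq_nonneg (Metric.infDist 0 (K i))])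
    nlinarith
  have hc2pos : 0 < c2 :=
    lt_of_lt_of_le (Real.rpow_pos_of_pos (key 0).1 p) (hdple 0)
  have hpinv : (1 : ℝ) / p ≤ 0 := le_of_lt (div_neg_of_pos_of_neg one_pos hp)
  set m : ℝ := c2 ^ (1 / p) / 2 with hmdef
  have hc2p : 0 < c2 ^ (1 / p) := Real.rpow_pos_of_pos hc2pos _
  have hm : 0 < m := by rw [hmdef]; positivity
  set M : ℝ := max (max 1 (4 * (1 - p))) (Real.log c2 + 1) + m + 1 with hMdef
  have hmax1 : (1 : ℝ) ≤ max (max 1 (4 * (1 - p))) (Real.log c2 + 1) :=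
    le_max_of_le_left (le_max_left _ _)
  have hmM : m < M := by rw [hMdef]; linarith
  refine ⟨m, M, hm, hmM, fun i => ?_⟩
  have hd := (key i).1
  set d : ℝ := Metric.infDist 0 (K i) with hddef2
  constructor
  · -- lower bound
    have h2 : c2 ^ (1 / p) ≤ (d ^ p) ^ (1 / p) :=
      Real.rpow_le_rpow_of_nonpos (Real.rpow_pos_of_pos hd p) (hdple i) hpinv
    have h3 : (d ^ p) ^ (1 / p) = d := by
      rw [← Real.rpow_mul hd.le, mul_one_div_cancel hp.ne, Real.rpow_one]
    rw [h3] at h2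
    have : m < c2 ^ (1 / p) := by rw [hmdef]; linarith
    linarith
  · -- upper bound
    by_contra hge
    push_neg at hge
    rw [hMdef] at hge
    have hd1 : 1 ≤ d := by linarith
    have hd4 : 4 * (1 - p) ≤ d := by
      have h6 : 4 * (1 - p) ≤ max (max 1 (4 * (1 - p))) (Real.log c2 + 1) :=
        le_max_of_le_left (le_max_right _ _)
      linarith
    have hdl : Real.log c2 + 1 ≤ d := by
      have h6 : Real.log c2 + 1 ≤ max (max 1 (4 * (1 - p))) (Real.log c2 + 1) :=
        le_max_right _ _
      linarith
    have hkey2 : d ^ p * Real.exp (d ^ 2 / 4) ≤ c2 := by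
      have h := hdp_le i
      have he : (0:ℝ) < Real.exp (d ^ 2 / 4) := Real.exp_pos _
      have hmul : Real.exp (-d ^ 2 / 4) * Real.exp (d ^ 2 / 4) = 1 := by
        rw [← Real.exp_add]
        ring_nf
        exact Real.exp_zero
      nlinarith [mul_nonneg (sub_nonneg.2 h) he.le]
    have hlog : Real.log d ≤ d := Real.log_le_self (by linarith)
    have hexp : Real.exp d ≤ d ^ p * Real.exp (d ^ 2 / 4) := by
      rw [Real.rpow_def_of_pos hd, ← Real.exp_add]
      apply Real.exp_le_exp.2
      have hpl : p * d ≤ p * Real.log d := mul_le_mul_of_nonpos_left hlog hp.le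
      nlinarith
    have hcd : c2 < Real.exp d := by
      have h1 : Real.exp (Real.log c2 + 1) ≤ Real.exp d := Real.exp_le_exp.2 hdl
      rw [Real.exp_add, Real.exp_log hc2pos] at h1
      nlinarith [Real.exp_one_gt_d9]
    linarith
end
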